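/- arXiv:2507.14734 — 2 statements merged into one kernel-verified Lean document; each statement's English description precedes it below -/
import Mathlib

section
/- For all positive integers n and k, the following polynomial identity in z holds: Σ_s b(n,k,s) z^s equals the sum, over all partitions π = (b_1, ..., b_k) of n into exactly k parts satisfying b_i − b_{i+1} ≥ 2 for 1 ≤ i ≤ k−1 and b_k ≥ 1, of (1+z)^{t(π)}, where t(π) = #{1 ≤ i ≤ k−1 : b_i − b_{i+1} > 2} + (1 if b_k > 1, and 0 if b_k = 1). -/
open Finset
open scoped Classical

namespace BasisPartitions

/-! ### Ordinary partitions -/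

/-- The parts of a partition, listed in weakly decreasing order. -/
def sparts {n : ℕ} (π : n.Partition) : List ℕ := π.parts.sort (· ≥ ·)

/-- `conj L j` is the number of parts that are `≥ j`, i.e. the `j`-th part of the
conjugate partition (for `j ≥ 1`). -/
def conj (L : List ℕ) (j : ℕ) : ℕ := L.countP (fun b => j ≤ b)

/-- The Durfee square size: the largest `k` such that the `k`-th part is `≥ k`. -/
def durfee (L : List ℕ) : ℕ := (List.range L.length).countP (fun i => i + 1 ≤ L.getD i 0)

/-- The `(i+1)`-st successive rank `r_{i+1} = b_{i+1} - c_{i+1}` (0-indexed `i`). -/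
def rank (L : List ℕ) (i : ℕ) : ℤ := (L.getD i 0 : ℤ) - (conj L (i + 1) : ℤ)

/-- The successive rank vector `(r_1, ..., r_k)` where `k` is the Durfee square size. -/
def ranks (L : List ℕ) : List ℤ := (List.range (durfee L)).map (rank L)

/-- A basis partition: the partitioned number is minimal among all partitions having
the same successive rank vector. -/
def IsBasis {n : ℕ} (π : n.Partition) : Prop :=
  ∀ (m : ℕ) (π' : m.Partition), ranks (sparts π') = ranks (sparts π) → n ≤ m

/-- The signature: the number of distinct part sizes below the Durfee square. -/
def sig (L : List ℕ) : ℕ := ((L.drop (durfee L)).dedup).length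

/-- `b(n;k)`: the number of basis partitions of `n` with Durfee square size `k`. -/
noncomputable def bCount (n k : ℕ) : ℕ :=
  Nat.card {π : n.Partition // IsBasis π ∧ durfee (sparts π) = k}

/-- `b(n,k,s)`: the number of basis partitions of `n` with Durfee square size `k`
and signature `s`. -/
noncomputable def bCount3 (n k s : ℕ) : ℕ :=
  Nat.card {π : n.Partition // IsBasis π ∧ durfee (sparts π) = k ∧ sig (sparts π) = s}

/-- `B(n;j)`: the number of basis partitions of `n` with signature `j`. -/
noncomputable def BCount (n j : ℕ) : ℕ :=
  Nat.card {π : n.Partition // IsBasis π ∧ sig (sparts π) = j}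

/-- Rogers–Ramanujan condition: exactly `k` parts, consecutive gaps `≥ 2`, last part `≥ 1`. -/
def RR (L : List ℕ) (k : ℕ) : Prop :=
  L.length = k ∧ (∀ i, i + 1 < k → L.getD (i + 1) 0 + 2 ≤ L.getD i 0) ∧ 1 ≤ L.getD (k - 1) 0

/-- `t(π)` for a Rogers–Ramanujan partition: the number of gaps `> 2`, plus 1 if the
last part is `> 1`. -/
def tRR (L : List ℕ) (k : ℕ) : ℕ :=
  ((Finset.range (k - 1)).filter (fun i => L.getD (i + 1) 0 + 2 < L.getD i 0)).card +
    (if 1 < L.getD (k - 1) 0 then 1 else 0)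

/-- Primary condition: exactly `k` parts, each part `≥ k`. -/
def Primary (L : List ℕ) (k : ℕ) : Prop := L.length = k ∧ ∀ x ∈ L, k ≤ x

/-- `t(π)` for a primary partition: the number of strict descents, plus 1 if the
last part is `> k`. -/
def tP (L : List ℕ) (k : ℕ) : ℕ :=
  ((Finset.range (k - 1)).filter (fun i => L.getD (i + 1) 0 < L.getD i 0)).card +
    (if k < L.getD (k - 1) 0 then 1 else 0)

/-- A complete basis partition: every `j` with `1 ≤ j ≤ k-1` occurs as a part of `π_b`
(a row below the Durfee square) or as a part of `π_r` (a column length strictly to the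
right of the Durfee square). -/
def IsComplete {n : ℕ} (π : n.Partition) : Prop :=
  ∀ j : ℕ, 1 ≤ j → j < durfee (sparts π) →
    j ∈ (sparts π).drop (durfee (sparts π)) ∨
      ∃ c : ℕ, durfee (sparts π) < c ∧ conj (sparts π) c = j

/-- `b_c(n)`: the number of complete basis partitions of `n`. -/
noncomputable def bc (n : ℕ) : ℕ := Nat.card {π : n.Partition // IsBasis π ∧ IsComplete π}

/-! ### Partitions with non-repeating odd parts and their 2-modular graphs -/

/-- Partitions with non-repeating (distinct) odd parts. -/
def Pod {n : ℕ} (π : n.Partition) : Prop := ∀ x, Odd x → π.parts.count x ≤ 1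

/-- The size (sum of entries) of the `c`-th column (1-indexed) of the 2-modular graph. -/
def mcolSize (L : List ℕ) (c : ℕ) : ℕ :=
  (L.map (fun x => if 2 * c ≤ x then 2 else if x = 2 * c - 1 then 1 else 0)).sum

/-- The length (number of entries) of the `c`-th column (1-indexed) of the 2-modular graph. -/
def mcolLen (L : List ℕ) (c : ℕ) : ℕ := L.countP (fun x => 2 * c - 1 ≤ x)

/-- The number of entries in a row of the 2-modular graph recording the part `x`,
namely `⌈x/2⌉`. -/
def mrowLen (x : ℕ) : ℕ := (x + 1) / 2

/-- The 2-modular Durfee square size: the largest `k` with `⌈b_k/2⌉ ≥ k`. -/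
def mdurfee (L : List ℕ) : ℕ := (List.range L.length).countP (fun i => 2 * i + 1 ≤ L.getD i 0)

/-- The `(i+1)`-st 2-modular successive rank: (size of row `i+1`) − (size of column `i+1`). -/
def mrank (L : List ℕ) (i : ℕ) : ℤ := (L.getD i 0 : ℤ) - (mcolSize L (i + 1) : ℤ)

/-- The 2-modular successive rank vector. -/
def mranks (L : List ℕ) : List ℤ := (List.range (mdurfee L)).map (mrank L)

/-- A minimal basis partition in `P_{o,d}`: the partitioned number is minimal among all
partitions with non-repeating odd parts having the same 2-modular successive rank vector. -/
def MinBasis {n : ℕ} (μ : n.Partition) : Prop :=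
  Pod μ ∧ ∀ (m : ℕ) (μ' : m.Partition), Pod μ' →
    mranks (sparts μ') = mranks (sparts μ) → n ≤ m

/-- A basis partition in `P_{o,d}`: no row of the 2-modular graph strictly below the Durfee
square has size equal to the size of a column strictly to the right of the Durfee square. -/
def PodBasis {n : ℕ} (π : n.Partition) : Prop :=
  Pod π ∧ ∀ i, mdurfee (sparts π) ≤ i → i < (sparts π).length →
    ∀ c, mdurfee (sparts π) < c → mcolSize (sparts π) c ≠ (sparts π).getD i 0

/-- The signature of a basis partition in `P_{o,d}`: the number of distinct sizes among the
rows of the 2-modular graph strictly below the Durfee square. -/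
def msig (L : List ℕ) : ℕ := ((L.drop (mdurfee L)).dedup).length

/-- The ℓ-signature: the number of distinct lengths among the rows of the 2-modular
graph strictly below the Durfee square. -/
def lsig (L : List ℕ) : ℕ := (((L.drop (mdurfee L)).map mrowLen).dedup).length

/-- `b(n;j)` for `P_{o,d}`: the number of basis partitions of `n` in `P_{o,d}` with
signature `j`. -/
noncomputable def podB (n j : ℕ) : ℕ := Nat.card {π : n.Partition // PodBasis π ∧ msig (sparts π) = j}

/-- The number of odd parts. -/
def numOdd (L : List ℕ) : ℕ := L.countP (fun x => x % 2 = 1)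

/-- A special partition: distinct parts with consecutive differences `≥ 4`, where a
difference equal to `4` is permitted only when both parts are even. -/
def Special (L : List ℕ) : Prop :=
  ∀ i, i + 1 < L.length →
    L.getD (i + 1) 0 + 4 ≤ L.getD i 0 ∧
      (L.getD i 0 = L.getD (i + 1) 0 + 4 → Even (L.getD i 0) ∧ Even (L.getD (i + 1) 0))

/-- The `i`-th part of a special partition, with the convention that the part just after
the last one is `-2`. -/
def hpart (L : List ℕ) (i : ℕ) : ℤ := if i < L.length then (L.getD i 0 : ℤ) else -2

/-- `ℓ(π)`: the number of gaps `> 4` in a special partition, with the convention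
`h_{k+1} = -2`. -/
def ell (L : List ℕ) : ℕ :=
  ((Finset.range L.length).filter (fun i => 4 < hpart L i - hpart L (i + 1))).card





/-- key Galois equivalence -/
lemma key3 {L : List ℕ} (hL : L.Pairwise (· ≥ ·)) (i j : ℕ) :
    j + 1 ≤ L.getD i 0 ↔ i + 1 ≤ conj L (j + 1) := by
  induction L generalizing i with
  | nil => simp [conj]
  | cons a T ih =>
    have ha : ∀ b ∈ T, b ≤ a := fun b hb => List.rel_of_pairwise_cons hL hb
    have hT : T.Pairwise (· ≥ ·) := hL.of_cons
    have hc : conj (a :: T) (j+1) = conj T (j+1) + if j + 1 ≤ a then 1 else 0 := by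
      simp [conj, List.countP_cons]
    cases i with
    | zero =>
      simp only [List.getD_cons_zero, hc]
      constructor
      · intro h; simp [h]
      · intro h
        by_cases hja : j + 1 ≤ a
        · exact hja
        · simp [hja] at h
          obtain ⟨b, hb, hjb⟩ := List.countP_pos_iff.mp (by omega : 0 < conj T (j+1))
          simp only [decide_eq_true_eq] at hjb
          exact le_trans hjb (ha b hb)
    | succ i =>
      simp only [List.getD_cons_succ, hc]
      rw [ih hT i]
      constructor
      · intro h
        have h1 : j + 1 ≤ T.getD i 0 := by
          rw [ih hT i]; omega
        have hmem : T.getD i 0 ∈ T := by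
          have hlen : i < T.length := by
            by_contra hlen
            push_neg at hlen
            rw [List.getD_eq_default _ _ hlen] at h1; omega
          rw [List.getD_eq_getElem _ _ hlen]
          exact List.getElem_mem hlen
        have : j + 1 ≤ a := le_trans h1 (ha _ hmem)
        simp [this]; omega
      · intro h
        split at h <;> omega

lemma getD_anti {L : List ℕ} (hL : L.Pairwise (· ≥ ·)) {i j : ℕ} (hij : i ≤ j) :
    L.getD j 0 ≤ L.getD i 0 := by
  rcases Nat.eq_zero_or_pos (L.getD j 0) with h | h
  · omega
  · obtain ⟨m, hm⟩ : ∃ m, L.getD j 0 = m + 1 := ⟨L.getD j 0 - 1, by omega⟩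
    have := (key3 hL j m).mp (by omega)
    have := (key3 hL i m).mpr (by omega)
    omega

lemma conj_anti (L : List ℕ) {j₁ j₂ : ℕ} (h : j₁ ≤ j₂) : conj L j₂ ≤ conj L j₁ := by
  apply List.countP_mono_left
  intro x _ hx
  simp only [decide_eq_true_eq] at *
  omega

lemma conj_le_length (L : List ℕ) (j : ℕ) : conj L j ≤ L.length :=
  List.countP_le_length

lemma length_eq_conj_one {L : List ℕ} (hpos : ∀ x ∈ L, 0 < x) : L.length = conj L 1 := by
  symm
  rw [conj, List.countP_eq_length]
  intro a ha
  simpa using Nat.succ_le_of_lt (hpos a ha)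

lemma getD_pos_iff {L : List ℕ} (hpos : ∀ x ∈ L, 0 < x) (i : ℕ) :
    0 < L.getD i 0 ↔ i < L.length := by
  constructor
  · intro h
    by_contra hlen
    push_neg at hlen
    rw [List.getD_eq_default _ _ hlen] at h; omega
  · intro h
    rw [List.getD_eq_getElem _ _ h]
    exact hpos _ (List.getElem_mem h)

lemma countP_range (N : ℕ) (p : ℕ → Bool) :
    (List.range N).countP p = ((Finset.range N).filter (fun i => p i = true)).card := by
  induction N with
  | zero => simp
  | succ N ih =>
    rw [List.range_succ, List.countP_append, Finset.range_add_one, Finset.filter_insert]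
    by_cases h : p N = true
    · rw [if_pos h, Finset.card_insert_of_notMem (by simp)]
      simp [h, ih, List.countP_cons]
    · rw [if_neg h]
      simp [h, ih, List.countP_cons]

lemma durfee_eq_of {L : List ℕ} (hL : L.Pairwise (· ≥ ·)) (hpos : ∀ x ∈ L, 0 < x) (k : ℕ)
    (h1 : ∀ i < k, i + 1 ≤ L.getD i 0) (h2 : L.getD k 0 ≤ k) : durfee L = k := by
  have hklen : k ≤ L.length := by
    rcases Nat.eq_zero_or_pos k with rfl | hk
    · omega
    · have := h1 (k-1) (by omega)
      have := (getD_pos_iff hpos (k-1)).mp (by omega)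
      omega
  rw [durfee, countP_range]
  have : (Finset.range L.length).filter (fun i => decide (i + 1 ≤ L.getD i 0) = true)
      = Finset.range k := by
    ext i
    simp only [Finset.mem_filter, Finset.mem_range, decide_eq_true_eq]
    constructor
    · rintro ⟨hi, hgi⟩
      by_contra hik
      push_neg at hik
      have := getD_anti hL hik
      omega
    · intro hik
      have := h1 i hik
      have := (getD_pos_iff hpos i).mp (by omega)
      exact ⟨this, h1 i hik⟩
  rw [this, Finset.card_range]

lemma durfee_spec {L : List ℕ} (hL : L.Pairwise (· ≥ ·)) (hpos : ∀ x ∈ L, 0 < x) :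
    (∀ i < durfee L, i + 1 ≤ L.getD i 0) ∧ L.getD (durfee L) 0 ≤ durfee L := by
  have hex : ∃ i, L.getD i 0 ≤ i := ⟨L.length, by
    rw [List.getD_eq_default _ _ (le_refl _)]; omega⟩
  set k := Nat.find hex with hk
  have h2 : L.getD k 0 ≤ k := Nat.find_spec hex
  have h1 : ∀ i < k, i + 1 ≤ L.getD i 0 := by
    intro i hi
    have := Nat.find_min hex hi
    omega
  rw [durfee_eq_of hL hpos k h1 h2]
  exact ⟨h1, h2⟩

/-- positions with part ≥ j+1 form `range (conj L (j+1))` -/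
lemma filter_positions {L : List ℕ} (hL : L.Pairwise (· ≥ ·)) (N : ℕ) (hN : L.length ≤ N) (j : ℕ) :
    (Finset.range N).filter (fun i => j + 1 ≤ L.getD i 0) = Finset.range (conj L (j+1)) := by
  ext i
  simp only [Finset.mem_filter, Finset.mem_range]
  constructor
  · rintro ⟨_, hgi⟩
    have := (key3 hL i j).mp hgi
    omega
  · intro hi
    have h := (key3 hL i j).mpr (by omega)
    have : i < L.length := by
      by_contra hc
      push_neg at hc
      rw [List.getD_eq_default _ _ hc] at h; omega
    exact ⟨by omega, h⟩

lemma sum_eq_sum_getD (L : List ℕ) : L.sum = ∑ i ∈ Finset.range L.length, L.getD i 0 := by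
  induction L with
  | nil => simp
  | cons a T ih =>
    rw [List.sum_cons, List.length_cons, Finset.sum_range_succ', ih]
    simp [add_comm]

lemma length_le_sum {L : List ℕ} (hpos : ∀ x ∈ L, 0 < x) : L.length ≤ L.sum := by
  induction L with
  | nil => simp
  | cons a T ih =>
    simp only [List.length_cons, List.sum_cons]
    have := hpos a (by simp)
    have := ih (fun x hx => hpos x (by simp [hx]))
    omega


def gE (L : List ℕ) (k : ℕ) : ℕ → ℕ := fun i => L.getD i 0 - k
def hE (L : List ℕ) (k : ℕ) : ℕ → ℕ := fun i => conj L (i + 1) - k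

section Extract
variable {L : List ℕ} {k : ℕ} (hs : L.Pairwise (· ≥ ·)) (hpos : ∀ x ∈ L, 0 < x)
  (hd : durfee L = k) (hk : 0 < k)

include hs hpos hd hk

lemma conj_k_ge : k ≤ conj L k := by
  have hspec := durfee_spec hs hpos
  rw [hd] at hspec
  have h1 := hspec.1 (k - 1) (by omega)
  have h2 := (key3 hs (k-1) (k-1)).mp (by omega)
  have hrw : k - 1 + 1 = k := by omega
  rw [hrw] at h2
  omega

lemma conj_succ_le : conj L (k + 1) ≤ k := by
  by_contra h
  push_neg at h
  have := (key3 hs k k).mpr (by omega)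
  have hspec := durfee_spec hs hpos
  rw [hd] at hspec
  have h2 := hspec.2
  omega

lemma fp_ge : ∀ i < k, k ≤ L.getD i 0 := by
  intro i hi
  have hspec := durfee_spec hs hpos
  rw [hd] at hspec
  have h1 := hspec.1 (k - 1) (by omega)
  have := getD_anti hs (show i ≤ k - 1 by omega)
  omega

lemma fp_le : ∀ i, k ≤ i → L.getD i 0 ≤ k := by
  intro i hi
  have hspec := durfee_spec hs hpos
  rw [hd] at hspec
  have h2 := hspec.2
  have := getD_anti hs hi
  omega

lemma fpk : ∀ i < k, L.getD i 0 = k + gE L k i := by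
  intro i hi
  have := fp_ge hs hpos hd hk i hi
  simp only [gE]; omega

lemma conjk : ∀ i < k, conj L (i + 1) = k + hE L k i := by
  intro i hi
  have h1 := conj_k_ge hs hpos hd hk
  have h2 : conj L (i + 1) ≥ conj L k := conj_anti L (by omega)
  simp only [hE]; omega

lemma gE0 : ∀ i, k ≤ i → gE L k i = 0 := by
  intro i hi
  have := fp_le hs hpos hd hk i hi
  simp only [gE]; omega

lemma hE0 : ∀ i, k ≤ i → hE L k i = 0 := by
  intro i hi
  have h1 := conj_succ_le hs hpos hd hk
  have h2 : conj L (i + 1) ≤ conj L (k + 1) := conj_anti L (by omega)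
  simp only [hE]; omega

omit hpos hd hk

lemma gE_anti : ∀ i, gE L k (i + 1) ≤ gE L k i := by
  intro i
  have := getD_anti hs (show i ≤ i + 1 by omega)
  simp only [gE]; omega

omit hs

lemma hE_anti : ∀ i, hE L k (i + 1) ≤ hE L k i := by
  intro i
  have := conj_anti L (show i + 1 ≤ i + 1 + 1 by omega)
  simp only [hE]; omega

include hs hpos hd hk

lemma ranks_eq : ranks L = (List.range k).map (fun i => (gE L k i : ℤ) - hE L k i) := by
  rw [ranks, hd]
  apply List.map_eq_map_iff.mpr
  intro i hi
  rw [List.mem_range] at hi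
  rw [rank, fpk hs hpos hd hk i hi, conjk hs hpos hd hk i hi]
  push_cast
  ring

lemma conj_eq_card_filter : ∀ j, k ≤ j →
    conj L (j + 1) = ((Finset.range k).filter (fun i => j + 1 ≤ k + gE L k i)).card := by
  intro j hj
  have hle : conj L (j + 1) ≤ k :=
    le_trans (conj_anti L (by omega)) (conj_succ_le hs hpos hd hk)
  have : (Finset.range k).filter (fun i => j + 1 ≤ k + gE L k i) = Finset.range (conj L (j+1)) := by
    ext i
    simp only [Finset.mem_filter, Finset.mem_range]
    constructor
    · rintro ⟨hik, hgi⟩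
      rw [← fpk hs hpos hd hk i hik] at hgi
      have := (key3 hs i j).mp hgi
      omega
    · intro hi
      have hik : i < k := by omega
      have := (key3 hs i j).mpr (by omega)
      rw [fpk hs hpos hd hk i hik] at this
      exact ⟨hik, this⟩
  rw [this, Finset.card_range]

lemma sum_ite_count (a B : ℕ) (h : a ≤ B) :
    ∑ j ∈ Finset.range B, (if j + 1 ≤ a then 1 else 0) = a := by
  rw [← Finset.sum_filter]
  have : (Finset.range B).filter (fun j => j + 1 ≤ a) = Finset.range a := by
    ext j
    simp only [Finset.mem_filter, Finset.mem_range]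
    omega
  rw [this, Finset.sum_const, Finset.card_range, smul_eq_mul, mul_one]

lemma sum_eq : L.sum = k * k + (∑ i ∈ Finset.range k, gE L k i)
    + ∑ i ∈ Finset.range k, hE L k i := by
  have hklen : k ≤ L.length :=
    le_trans (conj_k_ge hs hpos hd hk) (conj_le_length L k)
  have hsplit : ∑ i ∈ Finset.range L.length, L.getD i 0
      = (∑ i ∈ Finset.range k, L.getD i 0) + ∑ i ∈ Finset.Ico k L.length, L.getD i 0 := by
    rw [Finset.range_eq_Ico, ← Finset.sum_Ico_consecutive _ (Nat.zero_le k) hklen,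
      ← Finset.range_eq_Ico]
  rw [sum_eq_sum_getD, hsplit]
  have h1 : ∑ i ∈ Finset.range k, L.getD i 0 = k * k + ∑ i ∈ Finset.range k, gE L k i := by
    rw [Finset.sum_congr rfl (fun i hi => fpk hs hpos hd hk i (Finset.mem_range.mp hi))]
    rw [Finset.sum_add_distrib, Finset.sum_const, Finset.card_range, smul_eq_mul]
  have h2 : ∑ i ∈ Finset.Ico k L.length, L.getD i 0 = ∑ i ∈ Finset.range k, hE L k i := by
    have hstep : ∀ i ∈ Finset.Ico k L.length,
        L.getD i 0 = ∑ j ∈ Finset.range k, (if j + 1 ≤ L.getD i 0 then 1 else 0) := by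
      intro i hi
      rw [Finset.mem_Ico] at hi
      rw [sum_ite_count hs hpos hd hk _ _ (fp_le hs hpos hd hk i hi.1)]
    rw [Finset.sum_congr rfl hstep, Finset.sum_comm]
    apply Finset.sum_congr rfl
    intro j hj
    rw [Finset.mem_range] at hj
    rw [← Finset.sum_filter]
    have hfil : (Finset.Ico k L.length).filter (fun i => j + 1 ≤ L.getD i 0)
        = Finset.Ico k (conj L (j + 1)) := by
      ext i
      simp only [Finset.mem_filter, Finset.mem_Ico]
      constructor
      · rintro ⟨⟨hki, _⟩, hgi⟩
        exact ⟨hki, by have := (key3 hs i j).mp hgi; omega⟩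
      · rintro ⟨hki, hic⟩
        have hgi := (key3 hs i j).mpr (by omega)
        have : i < L.length := (getD_pos_iff hpos i).mp (by omega)
        exact ⟨⟨hki, this⟩, hgi⟩
    rw [hfil, Finset.sum_const, Nat.card_Ico, smul_eq_mul, mul_one]
    rw [conjk hs hpos hd hk j hj]
    simp [hE]
  omega

lemma mem_drop_iff (j : ℕ) :
    j ∈ L.drop k ↔ ∃ i, k ≤ i ∧ i < L.length ∧ L.getD i 0 = j := by
  rw [List.mem_iff_getElem]
  constructor
  · rintro ⟨t, ht, rfl⟩
    rw [List.length_drop] at ht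
    refine ⟨k + t, by omega, by omega, ?_⟩
    rw [List.getElem_drop, List.getD_eq_getElem _ _ (by omega)]
  · rintro ⟨i, hki, hil, rfl⟩
    refine ⟨i - k, by rw [List.length_drop]; omega, ?_⟩
    rw [List.getElem_drop, List.getD_eq_getElem _ _ (by omega)]
    congr 1
    omega

lemma occurs_below (j : ℕ) (hj : 0 < j) :
    (∃ i, k ≤ i ∧ i < L.length ∧ L.getD i 0 = j) ↔
      k < conj L j ∧ conj L (j + 1) < conj L j := by
  obtain ⟨j', rfl⟩ : ∃ j', j = j' + 1 := ⟨j - 1, by omega⟩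
  constructor
  · rintro ⟨i, hki, hil, hgi⟩
    have h1 := (key3 hs i j').mp (by omega)
    have h2 : ¬ (i + 1 ≤ conj L (j' + 1 + 1)) := by
      intro hcon
      have := (key3 hs i (j' + 1)).mpr hcon
      omega
    omega
  · rintro ⟨h1, h2⟩
    set i := max k (conj L (j' + 1 + 1)) with hi
    have hic : i < conj L (j' + 1) := by omega
    have hgd : j' + 1 ≤ L.getD i 0 := (key3 hs i j').mpr (by omega)
    have hub : ¬ (j' + 2 ≤ L.getD i 0) := by
      intro hcon
      have := (key3 hs i (j' + 1)).mp hcon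
      omega
    have hil : i < L.length := (getD_pos_iff hpos i).mp (by omega)
    exact ⟨i, by omega, hil, by omega⟩

lemma sig_eq : sig L = ((Finset.range k).filter (fun i => hE L k (i + 1) < hE L k i)).card := by
  classical
  rw [sig, hd, ← List.card_toFinset]
  symm
  refine Finset.card_bij' (fun i _ => i + 1) (fun j _ => j - 1) ?hi ?hj ?left ?right
  case hi =>
    intro i hi
    rw [Finset.mem_filter, Finset.mem_range] at hi
    obtain ⟨hik, hdesc⟩ := hi
    rw [List.mem_toFinset, mem_drop_iff hs hpos hd hk,
        occurs_below hs hpos hd hk (i + 1) (by omega)]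
    have hck : k ≤ conj L (i + 1) := le_trans (conj_k_ge hs hpos hd hk) (conj_anti L (by omega))
    have hck2 : i + 1 < k → k ≤ conj L (i + 1 + 1) :=
      fun h => le_trans (conj_k_ge hs hpos hd hk) (conj_anti L (by omega))
    have hck3 : k ≤ i + 1 → conj L (i + 1 + 1) ≤ k := fun h =>
      le_trans (conj_anti L (by omega)) (conj_succ_le hs hpos hd hk)
    simp only [hE] at hdesc
    by_cases hcase : i + 1 < k
    · have := hck2 hcase; omega
    · have := hck3 (by omega); omega
  case hj =>
    intro j hj
    rw [List.mem_toFinset, mem_drop_iff hs hpos hd hk] at hj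
    have hj1 : 0 < j := by
      obtain ⟨i, _, hil, rfl⟩ := hj
      exact (getD_pos_iff hpos i).mpr hil
    rw [occurs_below hs hpos hd hk j hj1] at hj
    obtain ⟨h1, h2⟩ := hj
    rw [Finset.mem_filter, Finset.mem_range]
    have hjk : j - 1 < k := by
      by_contra hcon
      push_neg at hcon
      have : conj L j ≤ conj L (k + 1) := conj_anti L (by omega)
      have := conj_succ_le hs hpos hd hk
      omega
    refine ⟨hjk, ?_⟩
    have hrw : j - 1 + 1 = j := by omega
    simp only [hE, hrw]
    omega
  case left => intro i hi; show i + 1 - 1 = i; omega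
  case right =>
    intro j hj
    rw [List.mem_toFinset, mem_drop_iff hs hpos hd hk] at hj
    have hj1 : 0 < j := by
      obtain ⟨i, _, hil, rfl⟩ := hj
      exact (getD_pos_iff hpos i).mpr hil
    show j - 1 + 1 = j
    omega

end Extract

/-! ### generic helpers -/

lemma range_map_sum (f : ℕ → ℕ) (n : ℕ) :
    ((List.range n).map f).sum = ∑ i ∈ Finset.range n, f i := by
  induction n with
  | zero => simp
  | succ n ih => rw [List.range_succ, List.map_append, List.sum_append, Finset.sum_range_succ, ih]; simp

lemma sorted_map_range {f : ℕ → ℕ} (hf : ∀ i j, i ≤ j → f j ≤ f i) (n : ℕ) :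
    ((List.range n).map f).Pairwise (· ≥ ·) := by
  rw [List.pairwise_map]
  exact (List.pairwise_lt_range (n := n)).imp (fun hab => hf _ _ (le_of_lt hab))

lemma tele {h : ℕ → ℕ} (hha : ∀ i, h (i + 1) ≤ h i) {a b : ℕ} (hab : a ≤ b) :
    ∑ j ∈ Finset.Ico a b, (h j - h (j + 1)) = h a - h b := by
  have hanti : Antitone h := antitone_nat_of_succ_le hha
  induction b, hab using Nat.le_induction with
  | base => simp
  | succ b hab ih =>
    rw [Finset.sum_Ico_succ_top hab, ih]
    have h1 : h b ≤ h a := hanti hab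
    have h2 : h (b + 1) ≤ h b := hha b
    omega

lemma wtele {h : ℕ → ℕ} (hha : ∀ i, h (i + 1) ≤ h i) (m : ℕ) :
    (∑ j ∈ Finset.range m, (h j - h (j + 1)) * (j + 1)) + m * h m = ∑ j ∈ Finset.range m, h j := by
  induction m with
  | zero => simp
  | succ m ih =>
    rw [Finset.sum_range_succ, Finset.sum_range_succ (f := h), ← ih, Nat.sub_mul]
    have hle : h (m + 1) * (m + 1) ≤ h m * (m + 1) := Nat.mul_le_mul_right _ (hha m)
    have e1 : (m + 1) * h (m + 1) = m * h (m + 1) + h (m + 1) := by ring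
    have e2 : h m * (m + 1) = m * h m + h m := by ring
    have e3 : h (m + 1) * (m + 1) = m * h (m + 1) + h (m + 1) := by ring
    omega

/-! ### the minimal-partition list construction -/

lemma pairwise_flatMap_replicate (m : ℕ → ℕ) : ∀ l : List ℕ, l.Pairwise (· > ·) →
    (l.flatMap fun j => List.replicate (m j) (j + 1)).Pairwise (· ≥ ·) := by
  intro l hl
  induction l with
  | nil => simp
  | cons a t ih =>
    rw [List.flatMap_cons, List.pairwise_append]
    obtain ⟨ha, ht⟩ := List.pairwise_cons.mp hl
    refine ⟨?_, ih ht, ?_⟩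
    · exact List.pairwise_replicate.mpr (Or.inr (le_refl _))
    · intro x hx y hy
      rw [List.mem_replicate] at hx
      rw [List.mem_flatMap] at hy
      obtain ⟨b, hb, hyr⟩ := hy
      rw [List.mem_replicate] at hyr
      have hab : a > b := ha b hb
      omega

lemma sum_flatMap' (f : ℕ → List ℕ) : ∀ l : List ℕ,
    (l.flatMap f).sum = (l.map (fun a => (f a).sum)).sum := by
  intro l
  induction l with
  | nil => simp
  | cons a t ih => rw [List.flatMap_cons, List.sum_append, ih, List.map_cons, List.sum_cons]

def bL (k : ℕ) (g h : ℕ → ℕ) : List ℕ :=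
  ((List.range k).map fun i => k + g i) ++
    ((List.range k).reverse.flatMap fun j => List.replicate (h j - h (j + 1)) (j + 1))

section Build
variable {k : ℕ} {g h : ℕ → ℕ} (hk : 0 < k)
  (hga : ∀ i, g (i + 1) ≤ g i) (hha : ∀ i, h (i + 1) ≤ h i)
  (hg0 : ∀ i, k ≤ i → g i = 0) (hh0 : ∀ i, k ≤ i → h i = 0)

lemma mem_bL_below {x : ℕ} (hx : x ∈ (List.range k).reverse.flatMap
    fun j => List.replicate (h j - h (j + 1)) (j + 1)) : 0 < x ∧ x ≤ k := by
  rw [List.mem_flatMap] at hx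
  obtain ⟨j, hj, hxr⟩ := hx
  rw [List.mem_reverse, List.mem_range] at hj
  rw [List.mem_replicate] at hxr
  omega

include hga in
lemma bL_sorted : (bL k g h).Pairwise (· ≥ ·) := by
  have hganti : Antitone g := antitone_nat_of_succ_le hga
  rw [bL, List.pairwise_append]
  refine ⟨sorted_map_range (fun i j hij => by have := hganti hij; omega) k, ?_, ?_⟩
  · apply pairwise_flatMap_replicate
    rw [List.pairwise_reverse]
    exact (List.pairwise_lt_range (n := k)).imp (fun hab => hab)
  · intro a ha b hb
    obtain ⟨hb1, hb2⟩ := mem_bL_below hb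
    rw [List.mem_map] at ha
    obtain ⟨i, _, rfl⟩ := ha
    omega

include hk hga in
lemma bL_pos : ∀ x ∈ bL k g h, 0 < x := by
  intro x hx
  rw [bL, List.mem_append] at hx
  rcases hx with hx | hx
  · rw [List.mem_map] at hx
    obtain ⟨i, _, rfl⟩ := hx
    omega
  · exact (mem_bL_below hx).1

lemma bL_getD_lt : ∀ i < k, (bL k g h).getD i 0 = k + g i := by
  intro i hi
  rw [bL, List.getD_append _ _ _ _ (by simpa using hi)]
  rw [List.getD_eq_getElem _ _ (by simpa using hi)]
  simp

lemma bL_getD_ge : ∀ i, k ≤ i → (bL k g h).getD i 0 ≤ k := by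
  intro i hi
  rw [bL, List.getD_append_right _ _ _ _ (by simpa using hi)]
  set T := (List.range k).reverse.flatMap fun j => List.replicate (h j - h (j + 1)) (j + 1)
  rcases Nat.lt_or_ge (i - ((List.range k).map fun i => k + g i).length) T.length with hlt | hge
  · rw [List.getD_eq_getElem _ _ hlt]
    exact (mem_bL_below (List.getElem_mem hlt)).2
  · rw [List.getD_eq_default _ _ hge]
    omega

include hha hh0 in
lemma bL_conj : ∀ j, conj (bL k g h) (j + 1) =
    if j < k then k + h j
    else ((Finset.range k).filter fun i => j + 1 ≤ k + g i).card := by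
  intro j
  rw [bL, conj, List.countP_append, List.countP_flatMap]
  have h1 : (((List.range k).map fun i => k + g i).countP fun b => decide (j + 1 ≤ b))
      = ((Finset.range k).filter fun i => j + 1 ≤ k + g i).card := by
    rw [List.countP_map, countP_range]
    congr 1
    apply Finset.filter_congr
    intro x _
    simp
  have h2 : ((List.map ((List.countP fun b => decide (j + 1 ≤ b)) ∘
      fun j' => List.replicate (h j' - h (j' + 1)) (j' + 1)) (List.range k).reverse)).sum
      = ∑ j' ∈ Finset.range k, if j + 1 ≤ j' + 1 then h j' - h (j' + 1) else 0 := by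
    rw [List.map_reverse, List.sum_reverse, range_map_sum]
    apply Finset.sum_congr rfl
    intro j' _
    simp only [Function.comp_apply, List.countP_replicate]
    simp
  rw [h1, h2]
  by_cases hjk : j < k
  · rw [if_pos hjk]
    have hfull : (Finset.range k).filter (fun i => j + 1 ≤ k + g i) = Finset.range k := by
      apply Finset.filter_true_of_mem
      intro i _
      omega
    rw [hfull, Finset.card_range]
    have hsum : ∑ j' ∈ Finset.range k, (if j + 1 ≤ j' + 1 then h j' - h (j' + 1) else 0)
        = ∑ j' ∈ Finset.Ico j k, (h j' - h (j' + 1)) := by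
      rw [← Finset.sum_filter]
      congr 1
      ext j'
      simp only [Finset.mem_filter, Finset.mem_range, Finset.mem_Ico]
      omega
    rw [hsum, tele hha (by omega), hh0 k (le_refl k)]
    omega
  · rw [if_neg hjk]
    have hzero : ∑ j' ∈ Finset.range k, (if j + 1 ≤ j' + 1 then h j' - h (j' + 1) else 0) = 0 := by
      apply Finset.sum_eq_zero
      intro j' hj'
      rw [Finset.mem_range] at hj'
      rw [if_neg (by omega)]
    rw [hzero, add_zero]

include hha hh0 in
lemma bL_sum : (bL k g h).sum = k * k + (∑ i ∈ Finset.range k, g i) + ∑ i ∈ Finset.range k, h i := by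
  rw [bL, List.sum_append]
  have h1 : (((List.range k).map fun i => k + g i)).sum = k * k + ∑ i ∈ Finset.range k, g i := by
    rw [range_map_sum, Finset.sum_add_distrib, Finset.sum_const, Finset.card_range, smul_eq_mul]
  have h2 : ((List.range k).reverse.flatMap fun j => List.replicate (h j - h (j + 1)) (j + 1)).sum
      = ∑ i ∈ Finset.range k, h i := by
    rw [sum_flatMap', List.map_reverse, List.sum_reverse, range_map_sum]
    have : ∀ j' ∈ Finset.range k, (List.replicate (h j' - h (j' + 1)) (j' + 1)).sum
        = (h j' - h (j' + 1)) * (j' + 1) := by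
      intro j' _
      rw [List.sum_replicate, smul_eq_mul]
    rw [Finset.sum_congr rfl this]
    have := wtele hha k
    rw [hh0 k (le_refl k)] at this
    omega
  omega

include hk hga hha hh0 in
lemma bL_durfee : durfee (bL k g h) = k := by
  apply durfee_eq_of (bL_sorted hga) (bL_pos hk hga)
  · intro i hi
    rw [bL_getD_lt i hi]
    omega
  · exact bL_getD_ge k (le_refl k)

end Build

section Build2
variable {k : ℕ} {g h : ℕ → ℕ} (hk : 0 < k)
  (hga : ∀ i, g (i + 1) ≤ g i) (hha : ∀ i, h (i + 1) ≤ h i)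
  (hg0 : ∀ i, k ≤ i → g i = 0) (hh0 : ∀ i, k ≤ i → h i = 0)

include hk hga hha hg0 hh0

lemma bL_gE : gE (bL k g h) k = g := by
  funext i
  rcases Nat.lt_or_ge i k with hik | hik
  · rw [gE, bL_getD_lt i hik]; omega
  · have := bL_getD_ge (g := g) (h := h) (k := k) i hik
    rw [gE, hg0 i hik]; omega

lemma bL_hE : hE (bL k g h) k = h := by
  funext i
  rcases Nat.lt_or_ge i k with hik | hik
  · rw [hE, bL_conj hha hh0 i, if_pos hik]; omega
  · rw [hh0 i hik]
    exact hE0 (bL_sorted hga) (bL_pos hk hga) (bL_durfee hk hga hha hh0) hk i hik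

lemma bL_ranks : ranks (bL k g h) = (List.range k).map (fun i => (g i : ℤ) - h i) := by
  have := ranks_eq (bL_sorted hga) (bL_pos hk hga) (bL_durfee hk hga hha hh0) hk
  rwa [bL_gE hk hga hha hg0 hh0, bL_hE hk hga hha hg0 hh0] at this

lemma bL_sig : sig (bL k g h) = ((Finset.range k).filter (fun i => h (i + 1) < h i)).card := by
  have := sig_eq (bL_sorted hga) (bL_pos hk hga) (bL_durfee hk hga hha hh0) hk
  rwa [bL_hE hk hga hha hg0 hh0] at this

end Build2

/-! ### uniqueness of sorted list from conjugate -/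

lemma eq_of_conj {L₁ L₂ : List ℕ} (hs1 : L₁.Pairwise (· ≥ ·)) (hs2 : L₂.Pairwise (· ≥ ·))
    (hp1 : ∀ x ∈ L₁, 0 < x) (hp2 : ∀ x ∈ L₂, 0 < x)
    (hc : ∀ j, conj L₁ (j + 1) = conj L₂ (j + 1)) : L₁ = L₂ := by
  have hgd : ∀ i, L₁.getD i 0 = L₂.getD i 0 := by
    intro i
    have h12 : ∀ j, (j + 1 ≤ L₁.getD i 0 ↔ j + 1 ≤ L₂.getD i 0) := fun j => by
      rw [key3 hs1, key3 hs2, hc j]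
    have ha := h12 (L₁.getD i 0 - 1)
    have hb := h12 (L₂.getD i 0 - 1)
    omega
  have hlen : L₁.length = L₂.length := by
    rw [length_eq_conj_one hp1, length_eq_conj_one hp2]
    exact hc 0
  apply List.ext_getElem hlen
  intro i h1 h2
  rw [← List.getD_eq_getElem _ 0 h1, ← List.getD_eq_getElem _ 0 h2]
  exact hgd i

/-! ### RR side -/

def stair (k i : ℕ) : ℕ := 2 * (k - 1 - i) + 1
def eL (L : List ℕ) (k : ℕ) : ℕ → ℕ := fun i => L.getD i 0 - stair k i
def bRR (k : ℕ) (e : ℕ → ℕ) : List ℕ := (List.range k).map fun i => stair k i + e i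

lemma stair_sum {k : ℕ} (hk : 0 < k) : ∑ i ∈ Finset.range k, stair k i = k * k := by
  obtain ⟨m, rfl⟩ : ∃ m, k = m + 1 := ⟨k - 1, by omega⟩
  have h1 : ∀ i ∈ Finset.range (m + 1), stair (m + 1) i = 2 * (m - i) + 1 := by
    intro i _; rw [stair]; omega
  rw [Finset.sum_congr rfl h1]
  have h2 := Finset.sum_range_reflect (fun i => 2 * i + 1) (m + 1)
  have h3 : ∀ j ∈ Finset.range (m + 1), 2 * (m + 1 - 1 - j) + 1 = 2 * (m - j) + 1 := by
    intro j _; omega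
  rw [Finset.sum_congr rfl h3] at h2
  rw [h2]
  have h4 : ∑ j ∈ Finset.range (m + 1), (2 * j + 1) = 2 * (∑ j ∈ Finset.range (m+1), j) + (m+1) := by
    rw [Finset.sum_add_distrib, Finset.mul_sum, Finset.sum_const, Finset.card_range, smul_eq_mul,
      mul_one]
  have h5 := Finset.sum_range_id_mul_two (m + 1)
  have h6 : (m + 1) * (m + 1 - 1) = (m + 1) * m := by congr 1
  nlinarith [h4, h5, h6]

section RRExtract
variable {L : List ℕ} {k : ℕ} (hrr : RR L k) (hk : 0 < k)

include hrr hk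

lemma stair_le : ∀ i < k, stair k i ≤ L.getD i 0 := by
  have key : ∀ d i, i < k → k - 1 - i = d → stair k i ≤ L.getD i 0 := by
    intro d
    induction d with
    | zero =>
      intro i hik hd
      have hieq : i = k - 1 := by omega
      subst hieq
      have := hrr.2.2
      rw [stair]
      omega
    | succ d ih =>
      intro i hik hd
      have h1 : i + 1 < k := by omega
      have h2 := ih (i + 1) h1 (by omega)
      have h3 := hrr.2.1 i h1
      rw [stair] at h2 ⊢
      omega
  intro i hik
  exact key (k - 1 - i) i hik rfl

lemma eL_zero : ∀ i, k ≤ i → eL L k i = 0 := by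
  intro i hik
  have hlen : L.length ≤ i := by rw [hrr.1]; omega
  rw [eL, List.getD_eq_default _ _ hlen]
  simp

lemma eL_eq : ∀ i < k, L.getD i 0 = stair k i + eL L k i := by
  intro i hik
  have := stair_le hrr hk i hik
  rw [eL]; omega

lemma eL_anti : ∀ i, eL L k (i + 1) ≤ eL L k i := by
  intro i
  rcases Nat.lt_or_ge (i + 1) k with h1 | h1
  · have ha := eL_eq hrr hk i (by omega)
    have hb := eL_eq hrr hk (i + 1) h1
    have hg := hrr.2.1 i h1
    rw [stair] at *
    omega
  · rw [eL_zero hrr hk (i + 1) h1]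
    omega

lemma RR_pos : ∀ x ∈ L, 0 < x := by
  intro x hx
  rw [List.mem_iff_getElem] at hx
  obtain ⟨i, hi, rfl⟩ := hx
  rw [← List.getD_eq_getElem _ 0 hi]
  have : i < k := by rw [← hrr.1]; omega
  have := stair_le hrr hk i this
  rw [stair] at this
  omega

lemma RR_sum : L.sum = k * k + ∑ i ∈ Finset.range k, eL L k i := by
  rw [sum_eq_sum_getD, hrr.1,
    Finset.sum_congr rfl (fun i hi => eL_eq hrr hk i (Finset.mem_range.mp hi)),
    Finset.sum_add_distrib, stair_sum hk]

lemma RR_tRR : tRR L k = ((Finset.range k).filter (fun i => eL L k (i + 1) < eL L k i)).card := by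
  obtain ⟨m, rfl⟩ : ∃ m, k = m + 1 := ⟨k - 1, by omega⟩
  have hQm : (eL L (m+1) (m + 1) < eL L (m+1) m) ↔ 1 < L.getD m 0 := by
    rw [eL_zero hrr hk (m + 1) (le_refl _), eL, stair]
    have hz : m + 1 - 1 - m = 0 := by omega
    rw [hz]
    omega
  have hcong : (Finset.range m).filter (fun i => eL L (m+1) (i + 1) < eL L (m+1) i)
      = (Finset.range m).filter (fun i => L.getD (i + 1) 0 + 2 < L.getD i 0) := by
    apply Finset.filter_congr
    intro i hi
    rw [Finset.mem_range] at hi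
    have ha := eL_eq hrr hk i (by omega)
    have hb := eL_eq hrr hk (i + 1) (by omega)
    rw [stair] at ha hb
    constructor <;> intro <;> omega
  rw [tRR, Finset.range_add_one, Finset.filter_insert]
  simp only [show m + 1 - 1 = m from rfl]
  by_cases hgd : 1 < L.getD m 0
  · rw [if_pos (hQm.mpr hgd), Finset.card_insert_of_notMem (by simp), hcong,
      if_pos hgd]
  · rw [if_neg (fun hc => hgd (hQm.mp hc)), hcong, if_neg hgd]
    omega

end RRExtract

section RRBuild
variable {k : ℕ} {e : ℕ → ℕ} (hk : 0 < k)
  (hea : ∀ i, e (i + 1) ≤ e i) (he0 : ∀ i, k ≤ i → e i = 0)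

lemma stair_anti : ∀ i j, i ≤ j → stair k j ≤ stair k i := by
  intro i j hij
  rw [stair, stair]
  omega

include hea in
lemma bRR_sorted : (bRR k e).Pairwise (· ≥ ·) := by
  have heanti : Antitone e := antitone_nat_of_succ_le hea
  apply sorted_map_range
  intro i j hij
  show stair k j + e j ≤ stair k i + e i
  have := stair_anti (k := k) i j hij
  have := heanti hij
  omega

lemma bRR_length : (bRR k e).length = k := by
  rw [bRR, List.length_map, List.length_range]

lemma bRR_getD : ∀ i < k, (bRR k e).getD i 0 = stair k i + e i := by
  intro i hik
  rw [bRR, List.getD_eq_getElem _ _ (by simpa using hik)]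
  simp

lemma bRR_pos : ∀ x ∈ bRR k e, 0 < x := by
  intro x hx
  rw [bRR, List.mem_map] at hx
  obtain ⟨i, _, rfl⟩ := hx
  rw [stair]
  omega

include hk hea in
lemma bRR_RR : RR (bRR k e) k := by
  refine ⟨bRR_length, ?_, ?_⟩
  · intro i hik
    rw [bRR_getD i (by omega), bRR_getD (i + 1) hik, stair, stair]
    have := hea i
    omega
  · rw [bRR_getD (k - 1) (by omega), stair]
    omega

include hk in
lemma bRR_sum : (bRR k e).sum = k * k + ∑ i ∈ Finset.range k, e i := by
  rw [bRR, range_map_sum, Finset.sum_add_distrib, stair_sum hk]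

include hk hea he0 in
lemma bRR_eL : eL (bRR k e) k = e := by
  funext i
  rcases Nat.lt_or_ge i k with hik | hik
  · rw [eL, bRR_getD i hik]
    omega
  · rw [he0 i hik, eL, List.getD_eq_default _ _ (by rw [bRR_length]; omega)]
    simp

include hk in
lemma bRR_of_RR {L : List ℕ} (hrr : RR L k) : bRR k (eL L k) = L := by
  apply List.ext_getElem (by rw [bRR_length, hrr.1])
  intro i h1 h2
  rw [bRR_length] at h1
  rw [← List.getD_eq_getElem _ 0, ← List.getD_eq_getElem _ 0, bRR_getD i h1,
    ← eL_eq hrr hk i h1]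

end RRBuild

/-! ### minimality -/

lemma min_le {k : ℕ} {g h g' h' : ℕ → ℕ}
    (hga : ∀ i, g (i + 1) ≤ g i) (hha : ∀ i, h (i + 1) ≤ h i)
    (hga' : ∀ i, g' (i + 1) ≤ g' i) (hha' : ∀ i, h' (i + 1) ≤ h' i)
    (hg0 : ∀ i, k ≤ i → g i = 0) (hh0 : ∀ i, k ≤ i → h i = 0)
    (hncd : ∀ i, ¬(g (i + 1) < g i ∧ h (i + 1) < h i))
    (hr : ∀ i, (g i : ℤ) - h i = (g' i : ℤ) - h' i) :
    ∀ i, g i ≤ g' i ∧ h i ≤ h' i := by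
  have key : ∀ d i, k ≤ i + d → g i ≤ g' i ∧ h i ≤ h' i := by
    intro d
    induction d with
    | zero =>
      intro i hi
      rw [hg0 i (by omega), hh0 i (by omega)]
      omega
    | succ d ih =>
      intro i hi
      by_cases hik : k ≤ i
      · rw [hg0 i hik, hh0 i hik]; omega
      · have IH := ih (i + 1) (by omega)
        have m1 := hga i
        have m2 := hha i
        have m3 := hga' i
        have m4 := hha' i
        have hri := hr i
        by_cases hgd : g (i + 1) < g i
        · have hhd : ¬ h (i + 1) < h i := fun hh => hncd i ⟨hgd, hh⟩
          omega
        · omega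
  intro i
  exact key k i (by omega)

/-! ### partitions -/


def defaultP (n : ℕ) : n.Partition :=
  ⟨Multiset.replicate n 1, by
    intro i hi
    rw [Multiset.eq_of_mem_replicate hi]
    omega, by simp⟩

noncomputable def mk (n : ℕ) (L : List ℕ) : n.Partition :=
  if h : (∀ x ∈ L, 0 < x) ∧ L.sum = n then
    ⟨(L : Multiset ℕ), fun hx => h.1 _ (by simpa using hx), by simpa using h.2⟩
  else defaultP n

lemma mk_parts {n : ℕ} {L : List ℕ} (h1 : ∀ x ∈ L, 0 < x) (h2 : L.sum = n) :
    (mk n L).parts = (L : Multiset ℕ) := by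
  rw [mk, dif_pos ⟨h1, h2⟩]

lemma sparts_sorted {n : ℕ} (π : n.Partition) : (sparts π).Pairwise (· ≥ ·) :=
  π.parts.pairwise_sort _

lemma sparts_coe {n : ℕ} (π : n.Partition) : ((sparts π) : Multiset ℕ) = π.parts :=
  π.parts.sort_eq _

lemma sparts_pos {n : ℕ} (π : n.Partition) : ∀ x ∈ sparts π, 0 < x := by
  intro x hx
  apply π.parts_pos
  rw [← sparts_coe π]
  exact_mod_cast hx

lemma sparts_sum {n : ℕ} (π : n.Partition) : (sparts π).sum = n := by
  have h := π.parts_sum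
  rw [← sparts_coe π] at h
  simpa using h

lemma sparts_mk {n : ℕ} {L : List ℕ} (hs : L.Pairwise (· ≥ ·)) (h1 : ∀ x ∈ L, 0 < x)
    (h2 : L.sum = n) : sparts (mk n L) = L := by
  apply List.Perm.eq_of_pairwise' (sparts_sorted _) hs
  rw [← Multiset.coe_eq_coe, sparts_coe, mk_parts h1 h2]

lemma partition_ext {n : ℕ} {π π' : n.Partition} (h : sparts π = sparts π') : π = π' :=
  Nat.Partition.ext (by rw [← sparts_coe π, ← sparts_coe π', h])

/-! ### basis characterization -/

lemma ranks_length (L : List ℕ) : (ranks L).length = durfee L := by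
  rw [ranks, List.length_map, List.length_range]

lemma reconstruct {L : List ℕ} {k : ℕ} (hs : L.Pairwise (· ≥ ·)) (hpos : ∀ x ∈ L, 0 < x)
    (hd : durfee L = k) (hk : 0 < k) : bL k (gE L k) (hE L k) = L := by
  apply eq_of_conj (bL_sorted (gE_anti hs)) hs (bL_pos hk (gE_anti hs)) hpos
  intro j
  rw [bL_conj (hE_anti) (hE0 hs hpos hd hk)]
  split
  next hjk => rw [conjk hs hpos hd hk j hjk]
  next hjk => rw [conj_eq_card_filter hs hpos hd hk j (by omega)]

lemma basis_of_ncd {n : ℕ} (π : n.Partition) {k : ℕ} (hk : 0 < k)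
    (hd : durfee (sparts π) = k)
    (hncd : ∀ i, ¬(gE (sparts π) k (i + 1) < gE (sparts π) k i ∧
      hE (sparts π) k (i + 1) < hE (sparts π) k i)) : IsBasis π := by
  intro m π' hr
  have hs := sparts_sorted π
  have hpos := sparts_pos π
  have hs' := sparts_sorted π'
  have hpos' := sparts_pos π'
  have hd' : durfee (sparts π') = k := by
    have h1 := congrArg List.length hr
    rw [ranks_length, ranks_length, hd] at h1
    exact h1
  have hrall : ∀ i, (gE (sparts π) k i : ℤ) - hE (sparts π) k i
      = (gE (sparts π') k i : ℤ) - hE (sparts π') k i := by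
    rw [ranks_eq hs' hpos' hd' hk, ranks_eq hs hpos hd hk] at hr
    intro i
    rcases Nat.lt_or_ge i k with hik | hik
    · exact (List.map_eq_map_iff.mp hr i (List.mem_range.mpr hik)).symm
    · rw [gE0 hs hpos hd hk i hik, hE0 hs hpos hd hk i hik,
        gE0 hs' hpos' hd' hk i hik, hE0 hs' hpos' hd' hk i hik]
  have hmin := min_le (gE_anti hs) (hE_anti) (gE_anti hs') (hE_anti)
    (gE0 hs hpos hd hk) (hE0 hs hpos hd hk) hncd hrall
  have hsum := sum_eq hs hpos hd hk
  have hsum' := sum_eq hs' hpos' hd' hk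
  have h1 : ∑ i ∈ Finset.range k, gE (sparts π) k i ≤ ∑ i ∈ Finset.range k, gE (sparts π') k i :=
    Finset.sum_le_sum (fun i _ => (hmin i).1)
  have h2 : ∑ i ∈ Finset.range k, hE (sparts π) k i ≤ ∑ i ∈ Finset.range k, hE (sparts π') k i :=
    Finset.sum_le_sum (fun i _ => (hmin i).2)
  have hn := sparts_sum π
  have hm := sparts_sum π'
  omega

lemma sum_ite_le (i k : ℕ) (hik : i < k) :
    ∑ j ∈ Finset.range k, (if j ≤ i then 1 else 0) = i + 1 := by
  rw [← Finset.sum_filter]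
  have : (Finset.range k).filter (fun j => j ≤ i) = Finset.range (i + 1) := by
    ext j
    simp only [Finset.mem_filter, Finset.mem_range]
    omega
  rw [this, Finset.sum_const, Finset.card_range, smul_eq_mul, mul_one]

lemma ncd_of_basis {n : ℕ} (π : n.Partition) {k : ℕ} (hk : 0 < k)
    (hd : durfee (sparts π) = k) (hb : IsBasis π) :
    ∀ i, ¬(gE (sparts π) k (i + 1) < gE (sparts π) k i ∧
      hE (sparts π) k (i + 1) < hE (sparts π) k i) := by
  rintro i ⟨hgd, hhd⟩
  have hs := sparts_sorted π
  have hpos := sparts_pos π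
  have hik : i < k := by
    by_contra hc
    push_neg at hc
    rw [gE0 hs hpos hd hk i hc, gE0 hs hpos hd hk (i + 1) (by omega)] at hgd
    omega
  have hganti : Antitone (gE (sparts π) k) := antitone_nat_of_succ_le (gE_anti hs)
  have hhanti : Antitone (hE (sparts π) k) := antitone_nat_of_succ_le (hE_anti)
  have hgge : ∀ j ≤ i, 1 ≤ gE (sparts π) k j := fun j hj => by
    have := hganti hj; omega
  have hhge : ∀ j ≤ i, 1 ≤ hE (sparts π) k j := fun j hj => by
    have := hhanti hj; omega
  set g' : ℕ → ℕ := fun j => gE (sparts π) k j - (if j ≤ i then 1 else 0) with hg'def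
  set h' : ℕ → ℕ := fun j => hE (sparts π) k j - (if j ≤ i then 1 else 0) with hh'def
  have hga' : ∀ j, g' (j + 1) ≤ g' j := by
    intro j
    simp only [hg'def]
    have hadj := gE_anti hs (L := sparts π) (k := k) j
    by_cases h2 : j ≤ i
    · by_cases h1 : j + 1 ≤ i
      · have := hgge j h2
        simp only [if_pos h1, if_pos h2]
        omega
      · have hji : j = i := by omega
        subst hji
        simp only [if_pos (le_refl j), if_neg h1]
        omega
    · simp only [if_neg (show ¬ j + 1 ≤ i by omega), if_neg h2]
      omega
  have hha' : ∀ j, h' (j + 1) ≤ h' j := by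
    intro j
    simp only [hh'def]
    have hadj := hE_anti (L := sparts π) (k := k) j
    by_cases h2 : j ≤ i
    · by_cases h1 : j + 1 ≤ i
      · have := hhge j h2
        simp only [if_pos h1, if_pos h2]
        omega
      · have hji : j = i := by omega
        subst hji
        simp only [if_pos (le_refl j), if_neg h1]
        omega
    · simp only [if_neg (show ¬ j + 1 ≤ i by omega), if_neg h2]
      omega
  have hg0' : ∀ j, k ≤ j → g' j = 0 := by
    intro j hj
    simp only [hg'def, gE0 hs hpos hd hk j hj, Nat.zero_sub]
  have hh0' : ∀ j, k ≤ j → h' j = 0 := by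
    intro j hj
    simp only [hh'def, hE0 hs hpos hd hk j hj, Nat.zero_sub]
  have hr : ranks (bL k g' h') = ranks (sparts π) := by
    rw [bL_ranks hk hga' hha' hg0' hh0', ranks_eq hs hpos hd hk]
    apply List.map_eq_map_iff.mpr
    intro j hj
    rw [List.mem_range] at hj
    simp only [hg'def, hh'def]
    by_cases hji : j ≤ i
    · have := hgge j hji
      have := hhge j hji
      simp only [if_pos hji]
      omega
    · simp only [if_neg hji]
      omega
  have hmπ : sparts (mk (bL k g' h').sum (bL k g' h')) = bL k g' h' :=
    sparts_mk (bL_sorted hga') (bL_pos hk hga') rfl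
  have hle := hb (bL k g' h').sum (mk (bL k g' h').sum (bL k g' h')) (by rw [hmπ, hr])
  have hMsum := bL_sum (g := g') hha' hh0' 
  have hsum := sum_eq hs hpos hd hk
  have hn := sparts_sum π
  have hgsum : ∑ j ∈ Finset.range k, gE (sparts π) k j
      = (∑ j ∈ Finset.range k, g' j) + (i + 1) := by
    rw [← sum_ite_le i k hik, ← Finset.sum_add_distrib]
    apply Finset.sum_congr rfl
    intro j _
    simp only [hg'def]
    by_cases hji : j ≤ i
    · have := hgge j hji
      simp only [if_pos hji]
      omega
    · simp only [if_neg hji]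
      omega
  have hhsum : ∑ j ∈ Finset.range k, hE (sparts π) k j
      = (∑ j ∈ Finset.range k, h' j) + (i + 1) := by
    rw [← sum_ite_le i k hik, ← Finset.sum_add_distrib]
    apply Finset.sum_congr rfl
    intro j _
    simp only [hh'def]
    by_cases hji : j ≤ i
    · have := hhge j hji
      simp only [if_pos hji]
      omega
    · simp only [if_neg hji]
      omega
  omega

/-! ### the correspondence -/

def geh (L : List ℕ) (k : ℕ) : ℕ → ℕ := fun i => gE L k i + hE L k i

noncomputable def toRRp (n k : ℕ) (π : n.Partition) : n.Partition :=
  mk n (bRR k (geh (sparts π) k))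

def toS (n k : ℕ) (π : n.Partition) : Finset ℕ :=
  (Finset.range k).filter (fun i => hE (sparts π) k (i + 1) < hE (sparts π) k i)

def descF (n k : ℕ) (ρ : n.Partition) : Finset ℕ :=
  (Finset.range k).filter (fun i => eL (sparts ρ) k (i + 1) < eL (sparts ρ) k i)

noncomputable def fromh (n k : ℕ) (ρ : n.Partition) (S : Finset ℕ) : ℕ → ℕ :=
  fun i => ∑ j ∈ S.filter (fun j => i ≤ j), (eL (sparts ρ) k j - eL (sparts ρ) k (j + 1))

noncomputable def fromg (n k : ℕ) (ρ : n.Partition) (S : Finset ℕ) : ℕ → ℕ :=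
  fun i => eL (sparts ρ) k i - fromh n k ρ S i

noncomputable def fromP (n k : ℕ) (ρ : n.Partition) (S : Finset ℕ) : n.Partition :=
  mk n (bL k (fromg n k ρ S) (fromh n k ρ S))

section FromPLemmas
variable {n k : ℕ} {ρ : n.Partition} {S : Finset ℕ}
  (hk : 0 < k) (hrr : RR (sparts ρ) k) (hS : S ⊆ descF n k ρ)

lemma fromh_rec (i : ℕ) : fromh n k ρ S i =
    (if i ∈ S then eL (sparts ρ) k i - eL (sparts ρ) k (i + 1) else 0) + fromh n k ρ S (i + 1) := by
  show (∑ j ∈ S.filter (fun j => i ≤ j), _) = _ + (∑ j ∈ S.filter (fun j => i + 1 ≤ j), _)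
  by_cases hiS : i ∈ S
  · rw [if_pos hiS]
    have hsplit : S.filter (fun j => i ≤ j) = insert i (S.filter (fun j => i + 1 ≤ j)) := by
      ext j
      simp only [Finset.mem_filter, Finset.mem_insert]
      constructor
      · rintro ⟨hjS, hij⟩
        by_cases hji : j = i
        · exact Or.inl hji
        · exact Or.inr ⟨hjS, by omega⟩
      · rintro (rfl | ⟨hjS, hij⟩)
        · exact ⟨hiS, le_refl j⟩
        · exact ⟨hjS, by omega⟩
    rw [hsplit, Finset.sum_insert (by simp only [Finset.mem_filter]; omega)]
  · rw [if_neg hiS, zero_add]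
    congr 1
    ext j
    simp only [Finset.mem_filter]
    constructor
    · rintro ⟨hjS, hij⟩
      refine ⟨hjS, ?_⟩
      rcases Nat.eq_or_lt_of_le hij with rfl | h
      · exact absurd hjS hiS
      · omega
    · rintro ⟨hjS, hij⟩
      exact ⟨hjS, by omega⟩

include hS in
lemma fromh_zero : ∀ i, k ≤ i → fromh n k ρ S i = 0 := by
  intro i hik
  show (∑ j ∈ S.filter (fun j => i ≤ j), _) = 0
  have hempty : S.filter (fun j => i ≤ j) = ∅ := by
    rw [Finset.filter_eq_empty_iff]
    intro j hj
    have := hS hj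
    rw [descF, Finset.mem_filter, Finset.mem_range] at this
    omega
  rw [hempty, Finset.sum_empty]

lemma fromh_anti : ∀ i, fromh n k ρ S (i + 1) ≤ fromh n k ρ S i := by
  intro i
  rw [fromh_rec i]
  exact Nat.le_add_left _ _

include hrr hk hS in
lemma fromh_le : ∀ i, fromh n k ρ S i ≤ eL (sparts ρ) k i := by
  have key : ∀ d i, k ≤ i + d → fromh n k ρ S i ≤ eL (sparts ρ) k i := by
    intro d
    induction d with
    | zero =>
      intro i hik
      rw [fromh_zero hS i (by omega)]
      omega
    | succ d ih =>
      intro i hik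
      by_cases hik2 : k ≤ i
      · rw [fromh_zero hS i hik2]; omega
      · have IH := ih (i + 1) (by omega)
        have hrec := fromh_rec (n := n) (k := k) (ρ := ρ) (S := S) i
        have hea := eL_anti hrr hk i
        by_cases hiS : i ∈ S
        · rw [if_pos hiS] at hrec; omega
        · rw [if_neg hiS] at hrec; omega
  intro i
  exact key k i (by omega)

include hrr hk hS in
lemma fromg_add : ∀ i, fromg n k ρ S i + fromh n k ρ S i = eL (sparts ρ) k i := by
  intro i
  have := fromh_le hk hrr hS i
  show eL (sparts ρ) k i - fromh n k ρ S i + fromh n k ρ S i = _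
  omega

include hrr hk hS in
lemma fromg_zero : ∀ i, k ≤ i → fromg n k ρ S i = 0 := by
  intro i hik
  have h1 := eL_zero hrr hk i hik
  have h2 := fromh_zero hS i hik
  show eL (sparts ρ) k i - fromh n k ρ S i = 0
  omega

include hrr hk hS in
lemma fromg_anti : ∀ i, fromg n k ρ S (i + 1) ≤ fromg n k ρ S i := by
  intro i
  have hrec := fromh_rec (S := S) (n := n) (k := k) (ρ := ρ) i
  have hea := eL_anti hrr hk i
  have h1 := fromh_le hk hrr hS i
  have h2 := fromh_le hk hrr hS (i + 1)
  show eL (sparts ρ) k (i + 1) - fromh n k ρ S (i + 1) ≤ eL (sparts ρ) k i - fromh n k ρ S i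
  by_cases hiS : i ∈ S
  · rw [if_pos hiS] at hrec; omega
  · rw [if_neg hiS] at hrec; omega

include hrr hk hS in
lemma fromh_desc : (Finset.range k).filter
    (fun i => fromh n k ρ S (i + 1) < fromh n k ρ S i) = S := by
  ext i
  simp only [Finset.mem_filter, Finset.mem_range]
  have hrec := fromh_rec (S := S) (n := n) (k := k) (ρ := ρ) i
  constructor
  · rintro ⟨hik, hdesc⟩
    by_contra hiS
    rw [if_neg hiS] at hrec
    omega
  · intro hiS
    have hd := hS hiS
    rw [descF, Finset.mem_filter, Finset.mem_range] at hd
    rw [if_pos hiS] at hrec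
    exact ⟨hd.1, by omega⟩

include hrr hk hS in
lemma fromh_ncd : ∀ i, ¬(fromg n k ρ S (i + 1) < fromg n k ρ S i ∧
    fromh n k ρ S (i + 1) < fromh n k ρ S i) := by
  rintro i ⟨h1, h2⟩
  have hrec := fromh_rec (S := S) (n := n) (k := k) (ρ := ρ) i
  have hea := eL_anti hrr hk i
  have g1 := fromh_le hk hrr hS i
  have g2 := fromh_le hk hrr hS (i + 1)
  simp only [fromg] at h1
  by_cases hiS : i ∈ S
  · rw [if_pos hiS] at hrec; omega
  · rw [if_neg hiS] at hrec; omega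

include hrr hk hS in
lemma fromP_sum : (bL k (fromg n k ρ S) (fromh n k ρ S)).sum = n := by
  rw [bL_sum (fromh_anti) (fromh_zero hS)]
  have hsum : (∑ i ∈ Finset.range k, fromg n k ρ S i) + ∑ i ∈ Finset.range k, fromh n k ρ S i
      = ∑ i ∈ Finset.range k, eL (sparts ρ) k i := by
    rw [← Finset.sum_add_distrib]
    exact Finset.sum_congr rfl (fun i _ => fromg_add hk hrr hS i)
  have hn := sparts_sum ρ
  have hRs := RR_sum hrr hk
  omega

include hrr hk hS in
lemma fromP_sparts : sparts (fromP n k ρ S) = bL k (fromg n k ρ S) (fromh n k ρ S) :=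
  sparts_mk (bL_sorted (fromg_anti hk hrr hS)) (bL_pos hk (fromg_anti hk hrr hS))
    (fromP_sum hk hrr hS)

end FromPLemmas

section ToRRLemmas
variable {n k : ℕ} {π : n.Partition} (hk : 0 < k) (hd : durfee (sparts π) = k)

include hk hd

lemma geh_anti : ∀ i, geh (sparts π) k (i + 1) ≤ geh (sparts π) k i := by
  intro i
  have h1 := gE_anti (sparts_sorted π) (k := k) i
  have h2 := hE_anti (L := sparts π) (k := k) i
  show gE (sparts π) k (i + 1) + hE (sparts π) k (i + 1) ≤ _ + _
  omega

lemma geh_zero : ∀ i, k ≤ i → geh (sparts π) k i = 0 := by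
  intro i hik
  have h1 := gE0 (sparts_sorted π) (sparts_pos π) hd hk i hik
  have h2 := hE0 (sparts_sorted π) (sparts_pos π) hd hk i hik
  show gE (sparts π) k i + hE (sparts π) k i = 0
  omega

lemma toRR_sum : (bRR k (geh (sparts π) k)).sum = n := by
  rw [bRR_sum hk]
  have hsum := sum_eq (sparts_sorted π) (sparts_pos π) hd hk
  have hn := sparts_sum π
  have hgeh : ∑ i ∈ Finset.range k, geh (sparts π) k i
      = (∑ i ∈ Finset.range k, gE (sparts π) k i) + ∑ i ∈ Finset.range k, hE (sparts π) k i := by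
    rw [← Finset.sum_add_distrib]
    rfl
  omega

lemma toRR_sparts : sparts (toRRp n k π) = bRR k (geh (sparts π) k) :=
  sparts_mk (bRR_sorted (geh_anti hk hd)) (bRR_pos) (toRR_sum hk hd)

lemma toRR_RR : RR (sparts (toRRp n k π)) k := by
  rw [toRR_sparts hk hd]
  exact bRR_RR hk (geh_anti hk hd)

lemma toRR_eL : eL (sparts (toRRp n k π)) k = geh (sparts π) k := by
  rw [toRR_sparts hk hd]
  exact bRR_eL hk (geh_anti hk hd) (geh_zero hk hd)

lemma toS_subset : toS n k π ⊆ descF n k (toRRp n k π) := by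
  intro i hi
  rw [toS, Finset.mem_filter, Finset.mem_range] at hi
  rw [descF, Finset.mem_filter, Finset.mem_range, toRR_eL hk hd]
  have h1 := gE_anti (sparts_sorted π) (k := k) i
  refine ⟨hi.1, ?_⟩
  show gE (sparts π) k (i + 1) + hE (sparts π) k (i + 1) < gE (sparts π) k i + hE (sparts π) k i
  have := hi.2
  omega

end ToRRLemmas

section Inverses
variable {n k : ℕ}

lemma fromP_basis {ρ : n.Partition} {S : Finset ℕ} (hk : 0 < k) (hrr : RR (sparts ρ) k)
    (hS : S ⊆ descF n k ρ) :
    IsBasis (fromP n k ρ S) ∧ durfee (sparts (fromP n k ρ S)) = k ∧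
      sig (sparts (fromP n k ρ S)) = S.card := by
  have hsp := fromP_sparts hk hrr hS
  have hd : durfee (sparts (fromP n k ρ S)) = k := by
    rw [hsp]
    exact bL_durfee hk (fromg_anti hk hrr hS) (fromh_anti) (fromh_zero hS)
  have hgE : gE (sparts (fromP n k ρ S)) k = fromg n k ρ S := by
    rw [hsp]
    exact bL_gE hk (fromg_anti hk hrr hS) (fromh_anti) (fromg_zero hk hrr hS) (fromh_zero hS)
  have hhE : hE (sparts (fromP n k ρ S)) k = fromh n k ρ S := by
    rw [hsp]
    exact bL_hE hk (fromg_anti hk hrr hS) (fromh_anti) (fromg_zero hk hrr hS) (fromh_zero hS)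
  refine ⟨?_, hd, ?_⟩
  · apply basis_of_ncd _ hk hd
    rw [hgE, hhE]
    exact fromh_ncd hk hrr hS
  · rw [sig_eq (sparts_sorted _) (sparts_pos _) hd hk, hhE, fromh_desc hk hrr hS]

lemma toS_card {π : n.Partition} (hk : 0 < k) (hd : durfee (sparts π) = k) :
    (toS n k π).card = sig (sparts π) := by
  rw [sig_eq (sparts_sorted π) (sparts_pos π) hd hk, toS]

lemma left_inv {π : n.Partition} (hk : 0 < k) (hd : durfee (sparts π) = k) (hb : IsBasis π) :
    fromP n k (toRRp n k π) (toS n k π) = π := by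
  have hrr := toRR_RR hk hd
  have hS := toS_subset hk hd
  have heρ := toRR_eL hk hd
  have hncd := ncd_of_basis π hk hd hb
  have hEanti := hE_anti (L := sparts π) (k := k)
  have hgEanti := gE_anti (sparts_sorted π) (L := sparts π) (k := k)
  -- fromh over the constructed ρ recovers hE
  have hheq : fromh n k (toRRp n k π) (toS n k π) = hE (sparts π) k := by
    funext i0
    have key : ∀ d i, k ≤ i + d → fromh n k (toRRp n k π) (toS n k π) i = hE (sparts π) k i := by
      intro d
      induction d with
      | zero =>
        intro i hik
        rw [fromh_zero hS i (by omega),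
          hE0 (sparts_sorted π) (sparts_pos π) hd hk i (by omega)]
      | succ d ih =>
        intro i hik
        by_cases hik2 : k ≤ i
        · rw [fromh_zero hS i hik2,
            hE0 (sparts_sorted π) (sparts_pos π) hd hk i hik2]
        · have IH := ih (i + 1) (by omega)
          have hrec := fromh_rec (n := n) (k := k) (ρ := toRRp n k π) (S := toS n k π) i
          rw [heρ] at hrec
          simp only [geh] at hrec
          by_cases hiS : i ∈ toS n k π
          · have hdesc : hE (sparts π) k (i + 1) < hE (sparts π) k i := by
              have := hiS
              rw [toS, Finset.mem_filter] at this
              exact this.2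
            have hgeq : ¬ (gE (sparts π) k (i + 1) < gE (sparts π) k i) :=
              fun hgd => hncd i ⟨hgd, hdesc⟩
            have := hgEanti i
            rw [if_pos hiS] at hrec
            omega
          · have hndesc : ¬ (hE (sparts π) k (i + 1) < hE (sparts π) k i) := by
              intro hdesc
              apply hiS
              rw [toS, Finset.mem_filter, Finset.mem_range]
              constructor
              · by_contra hc
                push_neg at hc
                rw [hE0 (sparts_sorted π) (sparts_pos π) hd hk i hc] at hdesc
                omega
              · exact hdesc
            have := hEanti i
            rw [if_neg hiS] at hrec
            omega
    exact key k i0 (by omega)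
  have hgeq : fromg n k (toRRp n k π) (toS n k π) = gE (sparts π) k := by
    funext i
    show eL (sparts (toRRp n k π)) k i - fromh n k (toRRp n k π) (toS n k π) i = _
    rw [heρ, hheq]
    show gE (sparts π) k i + hE (sparts π) k i - hE (sparts π) k i = _
    omega
  rw [fromP, hgeq, hheq, reconstruct (sparts_sorted π) (sparts_pos π) hd hk]
  apply partition_ext
  rw [sparts_mk (sparts_sorted π) (sparts_pos π) (sparts_sum π)]

lemma right_inv {ρ : n.Partition} {S : Finset ℕ} (hk : 0 < k) (hrr : RR (sparts ρ) k)
    (hS : S ⊆ descF n k ρ) :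
    toRRp n k (fromP n k ρ S) = ρ ∧ toS n k (fromP n k ρ S) = S := by
  have hsp := fromP_sparts hk hrr hS
  have hgE : gE (sparts (fromP n k ρ S)) k = fromg n k ρ S := by
    rw [hsp]
    exact bL_gE hk (fromg_anti hk hrr hS) (fromh_anti) (fromg_zero hk hrr hS) (fromh_zero hS)
  have hhE : hE (sparts (fromP n k ρ S)) k = fromh n k ρ S := by
    rw [hsp]
    exact bL_hE hk (fromg_anti hk hrr hS) (fromh_anti) (fromg_zero hk hrr hS) (fromh_zero hS)
  constructor
  · rw [toRRp]
    have hgeh : geh (sparts (fromP n k ρ S)) k = eL (sparts ρ) k := by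
      funext i
      show gE (sparts (fromP n k ρ S)) k i + hE (sparts (fromP n k ρ S)) k i = _
      rw [hgE, hhE]
      exact fromg_add hk hrr hS i
    rw [hgeh, bRR_of_RR hk hrr]
    apply partition_ext
    rw [sparts_mk (sparts_sorted ρ) (sparts_pos ρ) (sparts_sum ρ)]
  · rw [toS, hhE, fromh_desc hk hrr hS]

end Inverses

/-! ### the count -/

lemma descF_card {n k : ℕ} {ρ : n.Partition} (hk : 0 < k) (hrr : RR (sparts ρ) k) :
    (descF n k ρ).card = tRR (sparts ρ) k := by
  rw [descF, RR_tRR hrr hk]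

lemma main_count (n k s : ℕ) (hk : 0 < k) :
    (Finset.univ.filter (fun π : n.Partition =>
        IsBasis π ∧ durfee (sparts π) = k ∧ sig (sparts π) = s)).card =
      ∑ π ∈ Finset.univ.filter (fun π : n.Partition => RR (sparts π) k),
        (tRR (sparts π) k).choose s := by
  classical
  have hrhs : ∑ π ∈ Finset.univ.filter (fun π : n.Partition => RR (sparts π) k),
      (tRR (sparts π) k).choose s
      = ∑ π ∈ Finset.univ.filter (fun π : n.Partition => RR (sparts π) k),
        ((descF n k π).powersetCard s).card := by
    apply Finset.sum_congr rfl
    intro π hπ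
    rw [Finset.mem_filter] at hπ
    rw [Finset.card_powersetCard, descF_card hk hπ.2]
  rw [hrhs, ← Finset.card_sigma]
  refine Finset.card_bij'
    (fun π _ => (⟨toRRp n k π, toS n k π⟩ :
      (_ : n.Partition) × Finset ℕ))
    (fun p _ => fromP n k p.1 p.2) ?hi ?hj ?left ?right
  case hi =>
    intro π hπ
    rw [Finset.mem_filter] at hπ
    obtain ⟨_, hb, hd, hsig⟩ := hπ
    rw [Finset.mem_sigma, Finset.mem_filter, Finset.mem_powersetCard]
    exact ⟨⟨Finset.mem_univ _, toRR_RR hk hd⟩, toS_subset hk hd, by rw [toS_card hk hd, hsig]⟩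
  case hj =>
    intro p hp
    rw [Finset.mem_sigma, Finset.mem_filter, Finset.mem_powersetCard] at hp
    obtain ⟨⟨_, hrr⟩, hsub, hcard⟩ := hp
    obtain ⟨hb, hd, hsig⟩ := fromP_basis hk hrr hsub
    rw [Finset.mem_filter]
    exact ⟨Finset.mem_univ _, hb, hd, by rw [hsig, hcard]⟩
  case left =>
    intro π hπ
    rw [Finset.mem_filter] at hπ
    exact left_inv hk hπ.2.2.1 hπ.2.1
  case right =>
    rintro ⟨ρ, S⟩ hp
    rw [Finset.mem_sigma, Finset.mem_filter, Finset.mem_powersetCard] at hp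
    obtain ⟨⟨_, hrr⟩, hsub, hcard⟩ := hp
    obtain ⟨h1, h2⟩ := right_inv hk hrr hsub
    exact Sigma.ext h1 (heq_of_eq h2)

lemma bCount3_eq (n k s : ℕ) : bCount3 n k s = (Finset.univ.filter (fun π : n.Partition =>
    IsBasis π ∧ durfee (sparts π) = k ∧ sig (sparts π) = s)).card := by
  rw [bCount3, Nat.card_eq_fintype_card, Fintype.card_subtype]

lemma tRR_le_n {n k : ℕ} (hk : 0 < k) (π : n.Partition) (hrr : RR (sparts π) k) :
    tRR (sparts π) k ≤ n := by
  have h1 : tRR (sparts π) k ≤ k := by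
    rw [← descF_card hk hrr, descF]
    calc ((Finset.range k).filter _).card ≤ (Finset.range k).card := Finset.card_filter_le _ _
    _ = k := Finset.card_range k
  have h2 : (sparts π).length ≤ (sparts π).sum := length_le_sum (sparts_pos π)
  have h3 := sparts_sum π
  have h4 := hrr.1
  omega

lemma pow_expand (t N : ℕ) (h : t ≤ N) : ((1 : Polynomial ℤ) + Polynomial.X) ^ t
    = ∑ s ∈ Finset.range (N + 1), Polynomial.C ((t.choose s : ℤ)) * Polynomial.X ^ s := by
  rw [add_comm, add_pow]
  have step : ∀ s ∈ Finset.range (t + 1),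
      Polynomial.X ^ s * (1 : Polynomial ℤ) ^ (t - s) * ((t.choose s : ℕ) : Polynomial ℤ)
      = Polynomial.C ((t.choose s : ℤ)) * Polynomial.X ^ s := by
    intro s _
    rw [one_pow, mul_one]
    have : ((t.choose s : ℤ) : ℤ) = ((t.choose s : ℕ) : ℤ) := rfl
    rw [show Polynomial.C ((t.choose s : ℤ)) = ((t.choose s : ℕ) : Polynomial ℤ) by
      push_cast; rfl]
    ring
  rw [Finset.sum_congr rfl step]
  apply Finset.sum_subset (Finset.range_subset_range.mpr (by omega))
  intro s _ hs
  rw [Finset.mem_range, not_lt] at hs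
  rw [Nat.choose_eq_zero_of_lt (by omega)]
  simp

theorem statement6 (n k : ℕ) (hn : 0 < n) (hk : 0 < k) :
    (∑ s ∈ Finset.range (n + 1), Polynomial.C (bCount3 n k s : ℤ) * Polynomial.X ^ s) =
      ∑ π ∈ Finset.univ.filter (fun π : n.Partition => RR (sparts π) k),
        (1 + Polynomial.X) ^ tRR (sparts π) k := by
  classical
  have hR : ∀ π ∈ Finset.univ.filter (fun π : n.Partition => RR (sparts π) k),
      ((1 : Polynomial ℤ) + Polynomial.X) ^ tRR (sparts π) k
      = ∑ s ∈ Finset.range (n + 1), Polynomial.C (((tRR (sparts π) k).choose s : ℤ))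
          * Polynomial.X ^ s := by
    intro π hπ
    rw [Finset.mem_filter] at hπ
    exact pow_expand _ _ (tRR_le_n hk π hπ.2)
  rw [Finset.sum_congr rfl hR, Finset.sum_comm]
  apply Finset.sum_congr rfl
  intro s _
  rw [← Finset.sum_mul, ← map_sum]
  congr 2
  rw [bCount3_eq, main_count n k s hk]
  push_cast
  rfl

end BasisPartitions
end

section
/- A basis partition with Durfee square size k ≥ 1 and successive rank vector (r_1, ..., r_k) is complete if and only if r_j ≠ r_{j+1} for all j = 1, 2, ..., k−1. -/
open Finset
open scoped Classical

namespace BasisPartitions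

lemma getD_anti_s11 {l : List ℕ} (hs : l.Pairwise (· ≥ ·)) {i j : ℕ} (h : i ≤ j) :
    l.getD j 0 ≤ l.getD i 0 := by
  rcases lt_or_ge j l.length with hj | hj
  · have hi : i < l.length := lt_of_le_of_lt h hj
    rcases eq_or_lt_of_le h with rfl | h
    · exact le_refl _
    · have := List.Pairwise.rel_get_of_lt hs (a := ⟨i, hi⟩) (b := ⟨j, hj⟩) (by exact h)
      simpa [List.getD_eq_getElem?_getD, List.getElem?_eq_getElem, hi, hj, List.get_eq_getElem]
        using this
  · have h0 : l.getD j 0 = 0 := List.getD_eq_default _ _ hj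
    omega

lemma getD_mem {l : List ℕ} {i : ℕ} (hi : i < l.length) : l.getD i 0 ∈ l := by
  have : l.getD i 0 = l[i] := by
    simp [List.getD_eq_getElem?_getD, List.getElem?_eq_getElem hi]
  rw [this]; exact List.getElem_mem hi

lemma conj_lt_iff {l : List ℕ} (hs : l.Pairwise (· ≥ ·)) {c : ℕ} (hc : 1 ≤ c) (i : ℕ) :
    i < conj l c ↔ c ≤ l.getD i 0 := by
  induction l generalizing i with
  | nil => simp [conj]; omega
  | cons a t ih =>
    have hst : t.Pairwise (· ≥ ·) := hs.of_cons
    by_cases ha : c ≤ a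
    · have : conj (a :: t) c = conj t c + 1 := by simp [conj, ha]
      rw [this]
      cases i with
      | zero => simpa using ha
      | succ i => simpa using ih hst i
    · have hall : ∀ x ∈ t, ¬ c ≤ x := by
        intro x hx hcx
        exact ha (le_trans hcx (List.rel_of_pairwise_cons hs hx))
      have h0 : conj (a :: t) c = 0 := by
        simp only [conj, List.countP_cons, List.countP_eq_zero]
        simp only [decide_eq_true_eq]
        simpa [ha] using hall
      rw [h0]
      simp only [Nat.not_lt_zero, false_iff]
      cases i with
      | zero => simpa using ha
      | succ i =>
        intro hc2
        rw [List.getD_cons_succ] at hc2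
        rcases lt_or_ge i t.length with hi | hi
        · exact hall _ (getD_mem hi) hc2
        · rw [List.getD_eq_default _ _ hi] at hc2; omega

lemma countP_range_iff (P : ℕ → Bool) (hP : ∀ i j : ℕ, j ≤ i → P i → P j) (n : ℕ) (i : ℕ) :
    i < (List.range n).countP P ↔ (i < n ∧ P i) := by
  induction n generalizing i with
  | zero => simp
  | succ n ih =>
    rw [List.range_succ, List.countP_append]
    by_cases hn : P n
    · have hcn : (List.range n).countP P = n := by
        have hle := List.countP_le_length (l := List.range n) (p := P)
        rw [List.length_range] at hle
        rcases lt_or_eq_of_le hle with hlt | he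
        · exfalso
          have := (ih ((List.range n).countP P)).not.mp (lt_irrefl _)
          exact this ⟨hlt, hP n _ (le_of_lt hlt) hn⟩
        · exact he
      simp only [hcn, hn, List.countP_singleton, if_pos, decide_eq_true_eq]
      constructor
      · intro h; exact ⟨by omega, hP n i (by omega) hn⟩
      · intro ⟨h, _⟩; omega
    · simp only [List.countP_singleton, hn]
      simp only [Bool.false_eq_true, if_false, Nat.add_zero]
      rw [ih]
      constructor
      · intro ⟨h, h2⟩; exact ⟨by omega, h2⟩
      · intro ⟨h, h2⟩
        refine ⟨?_, h2⟩
        rcases Nat.lt_succ_iff_lt_or_eq.mp h with h | rfl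
        · exact h
        · exact absurd h2 (by simp [hn])

lemma durfee_eq_of_s11 {M : List ℕ} {k : ℕ} (h : ∀ t : ℕ, (t + 1 ≤ M.getD t 0) ↔ t < k) :
    durfee M = k := by
  have hk : k ≤ M.length := by
    rcases Nat.eq_zero_or_pos k with rfl | hk
    · omega
    · have := (h (k-1)).mpr (by omega)
      by_contra hc
      rw [List.getD_eq_default _ _ (by omega)] at this
      omega
  have heq : (List.range M.length).countP (fun i => i + 1 ≤ M.getD i 0) =
      (List.range M.length).countP (fun i => decide (i < k)) := by
    apply List.countP_congr
    intro a _
    simp only [decide_eq_true_eq]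
    exact h a
  rw [durfee, heq]
  set c := (List.range M.length).countP (fun i => decide (i < k)) with hc
  have h2 : ∀ i, i < c ↔ (i < M.length ∧ i < k) := by
    intro i
    rw [hc]
    rw [countP_range_iff _ (by intro i j hji hi; simp only [decide_eq_true_eq] at hi ⊢; omega)]
    simp
  by_contra hne
  rcases lt_or_gt_of_ne hne with hlt | hgt
  · have := (h2 c).mpr ⟨by omega, hlt⟩; omega
  · have := (h2 k).mp hgt; omega

lemma durfee_lt_iff {l : List ℕ} (hs : l.Pairwise (· ≥ ·)) (i : ℕ) :
    i < durfee l ↔ i + 1 ≤ l.getD i 0 := by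
  rw [durfee]
  rw [countP_range_iff _ (by
    intro i j hji hi
    simp only [decide_eq_true_eq] at hi ⊢
    have := getD_anti_s11 hs hji
    omega)]
  simp only [decide_eq_true_eq]
  constructor
  · exact fun h => h.2
  · intro h
    refine ⟨?_, h⟩
    by_contra hc
    rw [List.getD_eq_default _ _ (by omega)] at h
    omega

lemma conj_split (l : List ℕ) (j : ℕ) : conj l j = conj l (j+1) + l.count j := by
  induction l with
  | nil => simp [conj]
  | cons a t ih =>
    simp only [conj] at ih ⊢
    rw [List.countP_cons, List.countP_cons, List.count_cons]
    by_cases h1 : j ≤ a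
    · by_cases h2 : j + 1 ≤ a
      · simp [h1, h2, beq_iff_eq, show a ≠ j by omega]; simp only [Nat.lt_iff_add_one_le] at *; omega
      · simp [h1, h2, beq_iff_eq, show a = j by omega]; simp only [Nat.lt_iff_add_one_le] at *; omega
    · simp [h1, show ¬ (j+1 ≤ a) by omega, beq_iff_eq, show a ≠ j by omega]; simp only [Nat.lt_iff_add_one_le] at *; omega

lemma getD_eq_of_conj {l : List ℕ} (hs : l.Pairwise (· ≥ ·)) {v t : ℕ} (hv : 1 ≤ v)
    (h1 : t < conj l v) (h2 : conj l (v+1) ≤ t) : l.getD t 0 = v := by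
  have a1 := (conj_lt_iff hs hv t).mp h1
  have a2 := (conj_lt_iff hs (by omega : 1 ≤ v+1) t).not.mp (by omega)
  omega

lemma sum_map_sub_one {l : List ℕ} (h : ∀ x ∈ l, 1 ≤ x) :
    (l.map (fun x => x - 1)).sum + l.length = l.sum := by
  induction l with
  | nil => simp
  | cons a t ih =>
    simp only [List.map_cons, List.sum_cons, List.length_cons]
    have ha := h a (by simp)
    have := ih (fun x hx => h x (by simp [hx]))
    omega



lemma basis_not_both {n : ℕ} (π : n.Partition) (hb : IsBasis π) {m : ℕ} (hm : 1 ≤ m)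
    (hmk : m < durfee (sparts π)) (hcnt : 0 < (sparts π).count m)
    (hstep : (sparts π).getD m 0 < (sparts π).getD (m-1) 0) : False := by
  classical
  set L : List ℕ := sparts π with hL
  have hs : L.Pairwise (· ≥ ·) := Multiset.pairwise_sort _ _
  have hp : ∀ x ∈ L, 1 ≤ x := fun x hx => π.parts_pos (by
    rw [hL, sparts, Multiset.mem_sort] at hx; exact hx)
  have hsum : L.sum = n := by
    have h1 := Multiset.sort_eq (α := ℕ) π.parts (· ≥ ·)
    have h2 : ((π.parts.sort (· ≥ ·) : List ℕ) : Multiset ℕ).sum = π.parts.sum := by rw [h1]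
    rw [Multiset.sum_coe] at h2
    rw [hL, sparts, h2, π.parts_sum]
  set k := durfee L with hk
  have hgk : ∀ t, t < k → k ≤ L.getD t 0 := by
    intro t ht
    have h1 : (k-1) + 1 ≤ L.getD (k-1) 0 := (durfee_lt_iff hs (k-1)).mp (by omega)
    have h2 := getD_anti_s11 hs (show t ≤ k-1 by omega)
    omega
  have hstep' : L.getD m 0 + 1 ≤ L.getD (m-1) 0 := hstep
  have hgm : k ≤ L.getD m 0 := hgk m hmk
  have hgm1 : k + 1 ≤ L.getD (m-1) 0 := by omega
  have hlen : k ≤ L.length := by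
    by_contra hc
    have := hgk (k-1) (by omega)
    rw [List.getD_eq_default _ _ (by omega)] at this
    omega
  have hml : m ≤ L.length := by omega
  have hlt : (L.take m).length = m := by rw [List.length_take]; omega
  have htake : ∀ t, t < m → (L.take m).getD t 0 = L.getD t 0 := by
    intro t ht
    simp [List.getD_eq_getElem?_getD, List.getElem?_take, ht]
  have hdrop : ∀ t, (L.drop m).getD t 0 = L.getD (m+t) 0 := by
    intro t
    simp [List.getD_eq_getElem?_getD, List.getElem?_drop]
  have stake : (L.take m).Pairwise (· ≥ ·) := hs.sublist (List.take_sublist m L)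
  have sdrop : (L.drop m).Pairwise (· ≥ ·) := hs.sublist (List.drop_sublist m L)
  have hub_take : ∀ x ∈ L.take m, L.getD (m-1) 0 ≤ x := by
    intro x hx
    obtain ⟨t, ht, rfl⟩ := List.mem_iff_getElem.mp hx
    rw [hlt] at ht
    have h3 : (L.take m).getD t 0 = (L.take m)[t] := by
      have ht' : t < (L.take m).length := by rw [hlt]; exact ht
      simp [List.getD_eq_getElem?_getD, List.getElem?_eq_getElem ht']
    rw [← h3, htake t ht]
    exact getD_anti_s11 hs (by omega)
  have hub_drop : ∀ x ∈ L.drop m, x ≤ L.getD m 0 := by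
    intro x hx
    obtain ⟨t, ht, rfl⟩ := List.mem_iff_getElem.mp hx
    have h3 : (L.drop m).getD t 0 = (L.drop m)[t] := by
      simp [List.getD_eq_getElem?_getD, List.getElem?_eq_getElem ht]
    rw [← h3, hdrop t]
    exact getD_anti_s11 hs (by omega)
  have hmnot : m ∉ L.take m := by
    intro hx
    have := hub_take m hx
    omega
  have hcd : 0 < (L.drop m).count m := by
    have hsplit := List.count_append (a := m) (l₁ := L.take m) (l₂ := L.drop m)
    rw [List.take_append_drop] at hsplit
    have h0 : (L.take m).count m = 0 := List.count_eq_zero.mpr hmnot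
    omega
  have hmem_drop : m ∈ L.drop m := List.count_pos_iff.mp hcd
  set A : List ℕ := (L.take m).map (fun x => x - 1) with hA
  set B : List ℕ := (L.drop m).erase m with hB
  set L' : List ℕ := A ++ B with hL'
  have sA : A.Pairwise (· ≥ ·) :=
    List.Pairwise.map _ (fun a b (hab : a ≥ b) => Nat.sub_le_sub_right hab 1) stake
  have sB : B.Pairwise (· ≥ ·) := sdrop.sublist (List.erase_sublist (a := m) (l := L.drop m))
  have hcross : ∀ a ∈ A, ∀ b ∈ B, a ≥ b := by
    intro a ha b hbB
    obtain ⟨x, hx, rfl⟩ := List.mem_map.mp ha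
    have h1 := hub_take x hx
    have h2 := hub_drop b (List.mem_of_mem_erase hbB)
    omega
  have sL' : L'.Pairwise (· ≥ ·) := by
    rw [hL', List.pairwise_append]
    exact ⟨sA, sB, hcross⟩
  have hconjA : ∀ j, conj A j = conj (L.take m) (j+1) := by
    intro j
    rw [hA, conj, conj, List.countP_map]
    apply List.countP_congr
    intro x hx
    have h1 := hub_take x hx
    simp only [Function.comp, decide_eq_true_eq]
    omega
  have hconjB : ∀ j, conj B j + (if j ≤ m then 1 else 0) = conj (L.drop m) j := by
    intro j
    have hperm : List.Perm (L.drop m) (m :: B) := List.perm_cons_erase hmem_drop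
    have hcp := hperm.countP_eq (fun b => decide (j ≤ b))
    rw [List.countP_cons] at hcp
    simp only [conj]
    rw [hcp]
    by_cases hj : j ≤ m <;> simp [hj]
  have hsplitL : ∀ j, conj L j = conj (L.take m) j + conj (L.drop m) j := by
    intro j
    have h : conj (L.take m ++ L.drop m) j = conj (L.take m) j + conj (L.drop m) j := by
      simp only [conj, List.countP_append]
    rw [List.take_append_drop] at h
    exact h
  have hconjL' : ∀ j, conj L' j = conj (L.take m) (j+1) + conj B j := by
    intro j
    have h : conj L' j = conj A j + conj B j := by
      simp only [hL', conj, List.countP_append]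
    rw [h, hconjA]
  have hTm : ∀ c, 1 ≤ c → c ≤ L.getD (m-1) 0 → conj (L.take m) c = m := by
    intro c hc1 hc2
    have hup : conj (L.take m) c ≤ m := by
      have h := List.countP_le_length (p := fun b => decide (c ≤ b)) (l := L.take m)
      rw [hlt] at h
      exact h
    have hlow : m - 1 < conj (L.take m) c := by
      rw [conj_lt_iff stake hc1, htake (m-1) (by omega)]
      exact hc2
    omega
  have hBle : ∀ j, conj B j ≤ conj (L.drop m) j := fun j => by have := hconjB j; omega
  have hmono_take : ∀ j, conj (L.take m) (j+1) ≤ conj (L.take m) j :=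
    fun j => List.countP_mono_left (fun x _ => by simp only [decide_eq_true_eq]; omega)
  have hL'le : ∀ j, conj L' j ≤ conj L j := by
    intro j
    rw [hconjL', hsplitL]
    exact Nat.add_le_add (hmono_take j) (hBle j)
  have hconj_eq : ∀ j, 1 ≤ j → j ≤ k → conj L' j + (if j ≤ m then 1 else 0) = conj L j := by
    intro j h1 h2
    rw [hconjL', hsplitL]
    rw [hTm (j+1) (by omega) (by omega), hTm j h1 (by omega)]
    have := hconjB j
    omega
  have hget' : ∀ t, t < k → L'.getD t 0 + (if t < m then 1 else 0) = L.getD t 0 := by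
    intro t ht
    by_cases htm : t < m
    · have hvt : L.getD (m-1) 0 ≤ L.getD t 0 := getD_anti_s11 hs (by omega)
      set v := L.getD t 0 - 1 with hv
      have hv1 : v + 1 = L.getD t 0 := by omega
      have e1 : L'.getD t 0 = v := by
        apply getD_eq_of_conj sL' (by omega)
        · rw [hconjL']
          have h4 : t < conj (L.take m) (v+1) := by
            rw [conj_lt_iff stake (by omega), htake t htm]
            omega
          omega
        · rw [hconjL']
          have c1 : conj (L.take m) (v+1+1) ≤ t := by
            by_contra hcon
            rw [not_le, conj_lt_iff stake (by omega), htake t htm] at hcon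
            omega
          have c2 : conj (L.drop m) (v+1) = 0 := by
            by_contra hcon
            have h5 : 0 < conj (L.drop m) (v+1) := Nat.pos_of_ne_zero hcon
            rw [conj_lt_iff sdrop (by omega)] at h5
            have hd0 : (L.drop m).getD 0 0 = L.getD m 0 := by simp [hdrop 0]
            rw [hd0] at h5
            omega
          have c3 := hBle (v+1)
          omega
      rw [e1, if_pos htm]
      omega
    · push_neg at htm
      set v := L.getD t 0 with hv
      have hvk : k ≤ v := hgk t ht
      have hvm : v ≤ L.getD m 0 := getD_anti_s11 hs htm
      have e1 : L'.getD t 0 = v := by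
        apply getD_eq_of_conj sL' (by omega)
        · rw [hconjL']
          have c1 : conj (L.take m) (v+1) = m := hTm (v+1) (by omega) (by omega)
          have c2 : t - m < conj B v := by
            have h6 : conj B v + (if v ≤ m then 1 else 0) = conj (L.drop m) v := hconjB v
            have h4 : t - m < conj (L.drop m) v := by
              rw [conj_lt_iff sdrop (by omega), hdrop]
              have h5 : m + (t - m) = t := by omega
              rw [h5]
            rw [if_neg (by omega)] at h6
            omega
          omega
        · rw [hconjL']
          have c1 : conj (L.take m) (v+1+1) ≤ m := by
            have h := List.countP_le_length (p := fun b => decide (v+1+1 ≤ b)) (l := L.take m)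
            rw [hlt] at h
            exact h
          have c2 : conj (L.drop m) (v+1) ≤ t - m := by
            by_contra hcon
            rw [not_le, conj_lt_iff sdrop (by omega), hdrop] at hcon
            have h5 : m + (t - m) = t := by omega
            rw [h5] at hcon
            omega
          have c3 := hBle (v+1)
          omega
      rw [e1, if_neg (by omega)]
      omega
  have hd' : durfee L' = k := by
    apply durfee_eq_of_s11
    intro t
    constructor
    · intro hgt
      by_contra hc
      push_neg at hc
      have h1 : t < conj L' (t+1) := by
        rw [conj_lt_iff sL' (by omega)]; exact hgt
      have h2 := hL'le (t+1)
      have h3 : t < conj L (t+1) := by omega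
      rw [conj_lt_iff hs (by omega)] at h3
      have h4 := (durfee_lt_iff hs t).mpr h3
      omega
    · intro htk
      have hh := hget' t htk
      have hLt := hgk t htk
      by_cases htm : t < m
      · rw [if_pos htm] at hh
        have h5 : L.getD (m-1) 0 ≤ L.getD t 0 := getD_anti_s11 hs (by omega)
        omega
      · rw [if_neg htm] at hh
        omega
  have hranks : ranks L' = ranks L := by
    rw [ranks, ranks, hd', ← hk]
    apply List.map_congr_left
    intro i hi
    rw [List.mem_range] at hi
    have hgi := hget' i hi
    have hci := hconj_eq (i+1) (by omega) (by omega)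
    rw [rank, rank]
    by_cases h : i < m
    · rw [if_pos h] at hgi
      rw [if_pos (show i + 1 ≤ m from h)] at hci
      rw [← hgi, ← hci]
      push_cast
      ring
    · rw [if_neg h] at hgi
      rw [if_neg (show ¬ i + 1 ≤ m from h)] at hci
      rw [← hgi, ← hci]
      push_cast
      ring
  have hpos' : ∀ x ∈ L', 0 < x := by
    intro x hx
    rcases List.mem_append.mp hx with hx | hx
    · obtain ⟨y, hy, rfl⟩ := List.mem_map.mp hx
      have := hub_take y hy
      omega
    · exact hp x (List.mem_of_mem_drop (List.mem_of_mem_erase hx))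
  let π' : (L'.sum).Partition :=
    ⟨(↑L' : Multiset ℕ), fun {i} hi => hpos' i (Multiset.mem_coe.mp hi), by
      rw [Multiset.sum_coe]⟩
  have hsp' : sparts π' = L' := by
    have hperm : ((sparts π' : List ℕ) : Multiset ℕ) = (↑L' : Multiset ℕ) := by
      rw [sparts, Multiset.sort_eq]
    exact List.Perm.eq_of_pairwise' (Multiset.pairwise_sort _ _) sL' (Multiset.coe_eq_coe.mp hperm)
  have hsA : A.sum + m = (L.take m).sum := by
    have h := sum_map_sub_one (l := L.take m) (fun x hx => by have := hub_take x hx; omega)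
    rw [hlt] at h
    exact h
  have hsB : B.sum + m = (L.drop m).sum := by
    have hperm : List.Perm (L.drop m) (m :: B) := List.perm_cons_erase hmem_drop
    have h := hperm.sum_eq
    rw [List.sum_cons] at h
    omega
  have hsL : (L.take m).sum + (L.drop m).sum = n := by
    have h := congrArg List.sum (List.take_append_drop m L)
    rw [List.sum_append] at h
    rw [h, hsum]
  have hfin : n ≤ L'.sum := hb (L'.sum) π' (by rw [hsp']; exact hranks)
  have hApp : L'.sum = A.sum + B.sum := by rw [hL', List.sum_append]
  omega

theorem statement11 {n : ℕ} (π : n.Partition) (hb : IsBasis π)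
    (hk : 1 ≤ durfee (sparts π)) :
    IsComplete π ↔
      ∀ i : ℕ, i + 1 < durfee (sparts π) →
        rank (sparts π) i ≠ rank (sparts π) (i + 1) := by
  classical
  have hs : (sparts π).Pairwise (· ≥ ·) := Multiset.pairwise_sort _ _
  set L : List ℕ := sparts π with hL
  set k := durfee L with hk2
  have hgk : ∀ t, t < k → k ≤ L.getD t 0 := by
    intro t ht
    have h1 : (k-1) + 1 ≤ L.getD (k-1) 0 := (durfee_lt_iff hs (k-1)).mp (by omega)
    have h2 := getD_anti_s11 hs (show t ≤ k-1 by omega)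
    omega
  have hrankiff : ∀ i, i + 1 < k →
      (rank L i = rank L (i+1) ↔ L.getD i 0 = L.getD (i+1) 0 + L.count (i+1)) := by
    intro i hi
    rw [rank, rank, conj_split L (i+1)]
    push_cast
    omega
  have hmemdrop_iff : ∀ j, 1 ≤ j → j < k → (j ∈ L.drop k ↔ 0 < L.count j) := by
    intro j hj1 hjk
    constructor
    · intro h
      exact List.count_pos_iff.mpr (List.mem_of_mem_drop h)
    · intro h
      have hmem := List.count_pos_iff.mp h
      obtain ⟨t, ht, hLt⟩ := List.mem_iff_getElem.mp hmem
      have hgt : L.getD t 0 = j := by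
        simp [List.getD_eq_getElem?_getD, List.getElem?_eq_getElem ht, hLt]
      have htk : k ≤ t := by
        by_contra hc
        have := hgk t (by omega)
        omega
      have hsome : (L.drop k)[t - k]? = some j := by
        rw [List.getElem?_drop]
        have h5 : k + (t - k) = t := by omega
        rw [h5, List.getElem?_eq_getElem ht, hLt]
      exact List.mem_of_getElem? hsome
  have hcol_iff : ∀ i, i + 1 < k →
      ((∃ c, k < c ∧ conj L c = i+1) ↔ L.getD (i+1) 0 < L.getD i 0) := by
    intro i hi
    constructor
    · rintro ⟨c, hck, hcc⟩
      have h1 : i < conj L c := by omega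
      rw [conj_lt_iff hs (by omega) i] at h1
      have h2 : ¬ (i + 1 < conj L c) := by omega
      rw [conj_lt_iff hs (by omega) (i+1)] at h2
      omega
    · intro h
      refine ⟨L.getD (i+1) 0 + 1, by have := hgk (i+1) hi; omega, ?_⟩
      have h1 : i < conj L (L.getD (i+1) 0 + 1) := by
        rw [conj_lt_iff hs (by omega)]; omega
      have h2 : ¬ (i + 1 < conj L (L.getD (i+1) 0 + 1)) := by
        rw [conj_lt_iff hs (by omega)]; omega
      omega
  constructor
  · intro hcomp i hi heq
    have ha := (hrankiff i hi).mp heq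
    have hd := getD_anti_s11 hs (show i ≤ i+1 by omega)
    have hm1 : (i + 1 : ℕ) - 1 = i := by omega
    rcases hcomp (i+1) (by omega) hi with hmem | ⟨c, hck, hcc⟩
    · have hc1 : 0 < L.count (i+1) := (hmemdrop_iff (i+1) (by omega) (by omega)).mp hmem
      have hst : L.getD (i+1) 0 < L.getD i 0 := by omega
      exact basis_not_both π hb (m := i+1) (by omega) hi hc1 (by rw [hm1]; exact hst)
    · have hst : L.getD (i+1) 0 < L.getD i 0 := (hcol_iff i hi).mp ⟨c, hck, hcc⟩
      have hc1 : 0 < L.count (i+1) := by omega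
      exact basis_not_both π hb (m := i+1) (by omega) hi hc1 (by rw [hm1]; exact hst)
  · intro hr j hj1 hjk
    have hjk' : j < k := hjk
    have hij : j = (j - 1) + 1 := by omega
    set i := j - 1 with hi0
    have hik : i + 1 < k := by omega
    have hne := hr i hik
    have hne' : ¬ (L.getD i 0 = L.getD (i+1) 0 + L.count (i+1)) :=
      fun h => hne ((hrankiff i hik).mpr h)
    have hd := getD_anti_s11 hs (show i ≤ i+1 by omega)
    by_cases hc : 0 < L.count (i+1)
    · left
      rw [hij]
      exact (hmemdrop_iff (i+1) (by omega) (by omega)).mpr hc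
    · right
      have hst : L.getD (i+1) 0 < L.getD i 0 := by omega
      obtain ⟨c, hck, hcc⟩ := (hcol_iff i hik).mpr hst
      exact ⟨c, hck, by rw [hij]; exact hcc⟩

end BasisPartitions
end
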